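/- arXiv:1911.04681 — 6 statements merged into one kernel-verified Lean document; each statement's English description precedes it below -/
import Mathlib

section
/- Let A ∈ ℝ^{n×n} be a matrix with zero diagonal (A_{ii} = 0 for every i), and let δ ≥ 0. Then sup over x ∈ ℝⁿ with ‖x‖∞ ≤ δ of xᵀAx equals δ² times the maximum over y ∈ {−1,1}ⁿ of yᵀAy. -/

private lemma quad_update {n : ℕ} (A : Matrix (Fin n) (Fin n) ℝ) (hdiag : ∀ i, A i i = 0)
    (x : Fin n → ℝ) (k : Fin n) (t : ℝ) :
    (∑ i, ∑ j, A i j * (Function.update x k t) i * (Function.update x k t) j)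
      = (∑ i, ∑ j, A i j * (Function.update x k 0) i * (Function.update x k 0) j)
        + t * ((∑ j, A k j * (Function.update x k 0) j)
          + ∑ i, A i k * (Function.update x k 0) i) := by
  set z := Function.update x k 0 with hz
  have hzk : z k = 0 := Function.update_self k 0 x
  have step : ∀ i j, A i j * (Function.update x k t) i * (Function.update x k t) j
      = A i j * z i * z j + (if i = k then t * (A i j * z j) else 0)
        + (if j = k then t * (A i j * z i) else 0) := by
    intro i j
    by_cases hi : i = k <;> by_cases hj : j = k
    · subst hi; subst hj
      simp [hdiag, hzk]
    · subst hi
      simp [Function.update_of_ne hj, hzk, hz]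
      ring
    · subst hj
      simp [Function.update_of_ne hi, hzk, hz]
      ring
    · simp [Function.update_of_ne hi, Function.update_of_ne hj, hz, hi, hj]
  calc (∑ i, ∑ j, A i j * (Function.update x k t) i * (Function.update x k t) j)
      = ∑ i, ∑ j, (A i j * z i * z j + (if i = k then t * (A i j * z j) else 0)
        + (if j = k then t * (A i j * z i) else 0)) := by
        refine Finset.sum_congr rfl fun i _ => Finset.sum_congr rfl fun j _ => step i j
    _ = (∑ i, ∑ j, A i j * z i * z j)
        + t * ((∑ j, A k j * z j) + ∑ i, A i k * z i) := by
        simp only [Finset.sum_add_distrib]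
        simp [Finset.sum_ite_eq']
        rw [mul_add, Finset.mul_sum, Finset.mul_sum]
        ring

/-- For a matrix `A` with zero diagonal and `δ ≥ 0`, the supremum of the
quadratic form `xᵀAx` over the closed ℓ∞ ball of radius `δ` equals `δ²` times the
maximum of `yᵀAy` over `y ∈ {−1,1}ⁿ`. Here `Fin n → ℝ` carries the sup norm,
the hypothesis `hmax` states that `M` is the maximum of the quadratic form over the
hypercube `{−1,1}ⁿ`, and the conclusion states that `δ² · M` is the least upper bound
of the values of the quadratic form over the ℓ∞ ball of radius `δ`. -/
theorem stmt_2 {n : ℕ} (A : Matrix (Fin n) (Fin n) ℝ) (hdiag : ∀ i, A i i = 0)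
    (δ : ℝ) (hδ : 0 ≤ δ) (M : ℝ)
    (hmax : IsGreatest
      {v : ℝ | ∃ y : Fin n → ℝ, (∀ i, y i = 1 ∨ y i = -1) ∧
        v = ∑ i, ∑ j, A i j * y i * y j} M) :
    IsLUB {v : ℝ | ∃ x : Fin n → ℝ, ‖x‖ ≤ δ ∧ v = ∑ i, ∑ j, A i j * x i * x j}
      (δ ^ 2 * M) := by
  -- abbreviation
  set f : (Fin n → ℝ) → ℝ := fun x => ∑ i, ∑ j, A i j * x i * x j with hf
  -- key pushing lemma
  have key : ∀ (S : Finset (Fin n)) (x : Fin n → ℝ), (∀ i, |x i| ≤ δ) →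
      ∃ y : Fin n → ℝ, (∀ i, |y i| ≤ δ) ∧ (∀ i ∈ S, y i = δ ∨ y i = -δ) ∧ f x ≤ f y := by
    intro S
    induction S using Finset.induction_on with
    | empty => intro x hx; exact ⟨x, hx, by simp, le_rfl⟩
    | @insert a s ha IH =>
      intro x hx
      obtain ⟨y, hy1, hy2, hy3⟩ := IH x hx
      set B : ℝ := (∑ j, A a j * (Function.update y a 0) j)
        + ∑ i, A i a * (Function.update y a 0) i with hB
      set t : ℝ := if 0 ≤ B then δ else -δ with ht
      refine ⟨Function.update y a t, ?_, ?_, ?_⟩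
      · intro i
        by_cases hi : i = a
        · subst hi
          simp only [Function.update_self]
          rcases le_or_gt 0 B with h | h
          · simp [ht, h, abs_of_nonneg hδ]
          · simp [ht, not_le.mpr h, abs_of_nonneg hδ]
        · rw [Function.update_of_ne hi]; exact hy1 i
      · intro i hi
        by_cases hia : i = a
        · subst hia
          rcases le_or_gt 0 B with h | h
          · left; simp [ht, h]
          · right; simp [ht, not_le.mpr h]
        · rw [Function.update_of_ne hia]
          exact hy2 i (Finset.mem_insert.1 hi |>.resolve_left hia)
      · have e1 : f y = f (Function.update y a 0) + (y a) * B := by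
          have := quad_update A hdiag y a (y a)
          rw [Function.update_eq_self] at this
          exact this
        have e2 : f (Function.update y a t) = f (Function.update y a 0) + t * B :=
          quad_update A hdiag y a t
        have htB : y a * B ≤ t * B := by
          have h1 : y a * B ≤ |y a| * |B| := le_trans (le_abs_self _) (by rw [abs_mul])
          have h2 : |y a| * |B| ≤ δ * |B| :=
            mul_le_mul_of_nonneg_right (hy1 a) (abs_nonneg _)
          have h3 : t * B = δ * |B| := by
            rcases le_or_gt 0 B with h | h
            · simp [ht, h, abs_of_nonneg h]
            · simp only [ht, if_neg (not_le.mpr h), abs_of_neg h]; ring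
          rw [h3]; exact le_trans h1 h2
        calc f x ≤ f y := hy3
          _ = f (Function.update y a 0) + (y a) * B := e1
          _ ≤ f (Function.update y a 0) + t * B := by linarith
          _ = f (Function.update y a t) := e2.symm
  -- δ²M belongs to the set
  obtain ⟨⟨y₀, hy₀, hMy₀⟩, hub⟩ := hmax
  have hmem : δ ^ 2 * M ∈
      {v : ℝ | ∃ x : Fin n → ℝ, ‖x‖ ≤ δ ∧ v = ∑ i, ∑ j, A i j * x i * x j} := by
    refine ⟨fun i => δ * y₀ i, ?_, ?_⟩
    · rw [pi_norm_le_iff_of_nonneg hδ]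
      intro i
      rcases hy₀ i with h | h <;> simp [h, abs_of_nonneg hδ]
    · rw [hMy₀]
      rw [Finset.mul_sum]
      refine Finset.sum_congr rfl fun i _ => ?_
      rw [Finset.mul_sum]
      refine Finset.sum_congr rfl fun j _ => ?_
      ring
  -- upper bound
  have hub' : ∀ v ∈ {v : ℝ | ∃ x : Fin n → ℝ, ‖x‖ ≤ δ ∧ v = ∑ i, ∑ j, A i j * x i * x j},
      v ≤ δ ^ 2 * M := by
    rintro v ⟨x, hxnorm, rfl⟩
    have hx : ∀ i, |x i| ≤ δ := fun i => le_trans (norm_le_pi_norm x i) hxnorm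
    obtain ⟨y, hy1, hy2, hy3⟩ := key Finset.univ x hx
    set z : Fin n → ℝ := fun i => if y i = δ then 1 else -1 with hzdef
    have hyz : ∀ i, y i = δ * z i := by
      intro i
      by_cases h : y i = δ
      · simp [hzdef, h]
      · rcases hy2 i (Finset.mem_univ i) with h' | h'
        · exact absurd h' h
        · simp only [hzdef, if_neg h]; rw [h']; ring
    have hzpm : ∀ i, z i = 1 ∨ z i = -1 := by
      intro i; by_cases h : y i = δ <;> simp [hzdef, h]
    have hfz : f z ≤ M := hub ⟨z, hzpm, rfl⟩
    have hfy : f y = δ ^ 2 * f z := by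
      simp only [hf]
      rw [Finset.mul_sum]
      refine Finset.sum_congr rfl fun i _ => ?_
      rw [Finset.mul_sum]
      refine Finset.sum_congr rfl fun j _ => ?_
      rw [hyz i, hyz j]; ring
    calc f x ≤ f y := hy3
      _ = δ ^ 2 * f z := hfy
      _ ≤ δ ^ 2 * M := mul_le_mul_of_nonneg_left hfz (sq_nonneg δ)
  exact IsGreatest.isLUB ⟨hmem, hub'⟩
end

section
/- Let A ∈ ℝ^{n×n} be symmetric with zero diagonal, let δ > 0, and let p(x) = xᵀAx. Suppose x* ∈ ℝⁿ satisfies |⟨A_i, x*⟩| ≥ δ·‖A_i‖₁ for every i ∈ [n], where A_i is the i-th row of A. Let s ∈ {−1,1}ⁿ be defined by s_i = +1 if ⟨A_i, x*⟩ ≥ 0 and s_i = −1 otherwise. Then: (i) for every (x, z) ∈ ℝⁿ × ℝ with ‖x − (x* − δs)‖∞ ≤ δ and |z − (p(x*) + δ)| ≤ δ, one has z ≥ xᵀAx; and (ii) for every (x, z) ∈ ℝⁿ × ℝ with ‖x − (x* + δs)‖∞ ≤ δ and |z − (p(x*) − δ)| ≤ δ, one has z ≤ xᵀAx. -/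
private lemma expand_quad {n : ℕ} (A : Matrix (Fin n) (Fin n) ℝ) (hA : ∀ i j, A j i = A i j)
    (a u : Fin n → ℝ) :
    ∑ i, ∑ j, A i j * (a i + u i) * (a j + u j)
    = (∑ i, ∑ j, A i j * a i * a j)
      + 2 * ∑ i, u i * (∑ j, A i j * a j)
      + ∑ i, ∑ j, A i j * u i * u j := by
  have key : (∑ i, ∑ j, A i j * a i * u j) = ∑ i, ∑ j, A i j * u i * a j := by
    rw [Finset.sum_comm]
    refine Finset.sum_congr rfl fun i _ => Finset.sum_congr rfl fun j _ => ?_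
    rw [hA j i]; ring
  have h2 : (∑ i, u i * (∑ j, A i j * a j)) = ∑ i, ∑ j, A i j * u i * a j := by
    refine Finset.sum_congr rfl fun i _ => ?_
    rw [Finset.mul_sum]
    exact Finset.sum_congr rfl fun j _ => by ring
  have hterm : ∀ i j, A i j * (a i + u i) * (a j + u j)
      = A i j * a i * a j + A i j * a i * u j + A i j * u i * a j + A i j * u i * u j :=
    fun i j => by ring
  simp_rw [hterm, Finset.sum_add_distrib]
  rw [key, h2]; ring

private lemma quad_bound {n : ℕ} (A : Matrix (Fin n) (Fin n) ℝ) (δ : ℝ) (hδ : 0 < δ)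
    (u r : Fin n → ℝ) (hu : ∀ i, |u i| ≤ 2 * δ)
    (hr : ∀ i, δ * (∑ j, |A i j|) ≤ |r i|) :
    |∑ i, ∑ j, A i j * u i * u j| ≤ 2 * ∑ i, |u i| * |r i| := by
  rw [Finset.mul_sum]
  calc |∑ i, ∑ j, A i j * u i * u j|
      ≤ ∑ i, |∑ j, A i j * u i * u j| := Finset.abs_sum_le_sum_abs _ _
    _ ≤ ∑ i, 2 * (|u i| * |r i|) := by
        refine Finset.sum_le_sum fun i _ => ?_
        calc |∑ j, A i j * u i * u j|
            ≤ ∑ j, |A i j * u i * u j| := Finset.abs_sum_le_sum_abs _ _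
          _ ≤ ∑ j, |u i| * (2 * δ) * |A i j| := by
              refine Finset.sum_le_sum fun j _ => ?_
              rw [abs_mul, abs_mul]
              have h1 : |u j| ≤ 2 * δ := hu j
              have h2 : (0:ℝ) ≤ |A i j| * |u i| := by positivity
              nlinarith [abs_nonneg (A i j), abs_nonneg (u i), abs_nonneg (u j)]
          _ = |u i| * (2 * δ) * ∑ j, |A i j| := by rw [Finset.mul_sum]
          _ ≤ 2 * (|u i| * |r i|) := by
              have h3 := hr i
              have h4 : (0:ℝ) ≤ |u i| := abs_nonneg _
              nlinarith
    _ = ∑ i, 2 * (|u i| * |r i|) := rfl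

/-- Let `A` be symmetric with zero diagonal, `p(x) = xᵀAx`, and suppose
`x*` satisfies `|⟨Aᵢ,x*⟩| ≥ δ·‖Aᵢ‖₁` for every row `Aᵢ`. With
`sᵢ = sgn(⟨Aᵢ,x*⟩)`, the PTF `sgn(z − xᵀAx)` does not change sign on the ℓ∞ ball of
radius `δ` around either `(x* − δs, p(x*) + δ)` (where `z ≥ xᵀAx`) or
`(x* + δs, p(x*) − δ)` (where `z ≤ xᵀAx`). `Fin n → ℝ` carries the sup norm. -/
theorem stmt_10 {n : ℕ} (A : Matrix (Fin n) (Fin n) ℝ) (hsymm : A.IsSymm)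
    (hdiag : ∀ i, A i i = 0) (δ : ℝ) (hδ : 0 < δ) (xstar : Fin n → ℝ)
    (hx : ∀ i, δ * (∑ j, |A i j|) ≤ |∑ j, A i j * xstar j|)
    (s : Fin n → ℝ)
    (hs : ∀ i, s i = if 0 ≤ ∑ j, A i j * xstar j then 1 else -1) :
    (∀ (x : Fin n → ℝ) (z : ℝ),
      ‖x - (xstar - δ • s)‖ ≤ δ →
      |z - ((∑ i, ∑ j, A i j * xstar i * xstar j) + δ)| ≤ δ →
      (∑ i, ∑ j, A i j * x i * x j) ≤ z) ∧
    (∀ (x : Fin n → ℝ) (z : ℝ),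
      ‖x - (xstar + δ • s)‖ ≤ δ →
      |z - ((∑ i, ∑ j, A i j * xstar i * xstar j) - δ)| ≤ δ →
      z ≤ ∑ i, ∑ j, A i j * x i * x j) := by
  have hA : ∀ i j, A j i = A i j := fun i j => hsymm.apply i j
  set r : Fin n → ℝ := fun i => ∑ j, A i j * xstar j with hr
  constructor
  · intro x z hxn hzn
    set u : Fin n → ℝ := fun i => x i - xstar i with hu
    have hui : ∀ i, |u i + δ * s i| ≤ δ := by
      intro i
      have h1 := (norm_le_pi_norm (x - (xstar - δ • s)) i).trans hxn
      simp only [Pi.sub_apply, Pi.smul_apply, smul_eq_mul, Real.norm_eq_abs] at h1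
      have : x i - (xstar i - δ * s i) = u i + δ * s i := by rw [hu]; ring
      rwa [this] at h1
    have hsign : ∀ i, u i * r i = -(|u i| * |r i|) ∧ |u i| ≤ 2 * δ := by
      intro i
      have hsi := hs i
      have h := abs_le.1 (hui i)
      rcases le_or_gt 0 (r i) with hri | hri
      · rw [if_pos hri] at hsi
        rw [hsi, mul_one] at h
        have hu0 : u i ≤ 0 := by linarith [h.2]
        constructor
        · rw [abs_of_nonpos hu0, abs_of_nonneg hri]; ring
        · rw [abs_of_nonpos hu0]; linarith [h.1]
      · rw [if_neg (not_le.2 hri)] at hsi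
        rw [hsi] at h
        have hu0 : 0 ≤ u i := by nlinarith [h.1]
        constructor
        · rw [abs_of_nonneg hu0, abs_of_neg hri]; ring
        · rw [abs_of_nonneg hu0]; nlinarith [h.2]
    have hexp : ∑ i, ∑ j, A i j * x i * x j
        = (∑ i, ∑ j, A i j * xstar i * xstar j)
          + 2 * ∑ i, u i * r i + ∑ i, ∑ j, A i j * u i * u j := by
      have hxi : ∀ i, x i = xstar i + u i := fun i => by rw [hu]; ring
      simp_rw [hxi]
      exact expand_quad A hA xstar u
    have hcross : ∑ i, u i * r i = -∑ i, |u i| * |r i| := by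
      rw [← Finset.sum_neg_distrib]
      exact Finset.sum_congr rfl fun i _ => (hsign i).1
    have hQ := quad_bound A δ hδ u r (fun i => (hsign i).2) hx
    have hQ' := (abs_le.1 hQ).2
    have hz := (abs_le.1 hzn).1
    rw [hexp, hcross]
    linarith
  · intro x z hxn hzn
    set u : Fin n → ℝ := fun i => x i - xstar i with hu
    have hui : ∀ i, |u i - δ * s i| ≤ δ := by
      intro i
      have h1 := (norm_le_pi_norm (x - (xstar + δ • s)) i).trans hxn
      simp only [Pi.sub_apply, Pi.add_apply, Pi.smul_apply, smul_eq_mul, Real.norm_eq_abs] at h1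
      have : x i - (xstar i + δ * s i) = u i - δ * s i := by rw [hu]; ring
      rwa [this] at h1
    have hsign : ∀ i, u i * r i = |u i| * |r i| ∧ |u i| ≤ 2 * δ := by
      intro i
      have hsi := hs i
      have h := abs_le.1 (hui i)
      rcases le_or_gt 0 (r i) with hri | hri
      · rw [if_pos hri] at hsi
        rw [hsi, mul_one] at h
        have hu0 : 0 ≤ u i := by linarith [h.1]
        constructor
        · rw [abs_of_nonneg hu0, abs_of_nonneg hri]
        · rw [abs_of_nonneg hu0]; linarith [h.2]
      · rw [if_neg (not_le.2 hri)] at hsi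
        rw [hsi] at h
        have hu0 : u i ≤ 0 := by nlinarith [h.2]
        constructor
        · rw [abs_of_nonpos hu0, abs_of_neg hri]; ring
        · rw [abs_of_nonpos hu0]; nlinarith [h.1]
    have hexp : ∑ i, ∑ j, A i j * x i * x j
        = (∑ i, ∑ j, A i j * xstar i * xstar j)
          + 2 * ∑ i, u i * r i + ∑ i, ∑ j, A i j * u i * u j := by
      have hxi : ∀ i, x i = xstar i + u i := fun i => by rw [hu]; ring
      simp_rw [hxi]
      exact expand_quad A hA xstar u
    have hcross : ∑ i, u i * r i = ∑ i, |u i| * |r i| :=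
      Finset.sum_congr rfl fun i _ => (hsign i).1
    have hQ := quad_bound A δ hδ u r (fun i => (hsign i).2) hx
    have hQ' := (abs_le.1 hQ).1
    have hz := (abs_le.1 hzn).2
    rw [hexp, hcross]
    linarith
end

section
/- There is a universal constant C > 0 such that the following holds. Let n, m ≥ 1, δ > 0, η ∈ (0,1), let A ∈ ℝ^{n×n} be symmetric with zero diagonal whose every row A_i is nonzero, let p(x) = xᵀAx, and suppose ρ ≥ C·δ·n^{3/2}·m/η. Let x^{(1)}, …, x^{(m)} be independent random vectors each distributed as N(0,ρ²)ⁿ, and define s^{(ℓ)} ∈ {−1,1}ⁿ by s^{(ℓ)}_i = +1 if ⟨A_i, x^{(ℓ)}⟩ ≥ 0 and −1 otherwise. Then with probability at least 1 − η, for every ℓ ∈ [m]: z ≥ xᵀAx for every (x, z) with ‖x − (x^{(ℓ)} − δs^{(ℓ)})‖∞ ≤ δ and |z − (p(x^{(ℓ)}) + δ)| ≤ δ, and z ≤ xᵀAx for every (x, z) with ‖x − (x^{(ℓ)} + δs^{(ℓ)})‖∞ ≤ δ and |z − (p(x^{(ℓ)}) − δ)| ≤ δ. -/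
open MeasureTheory ProbabilityTheory

open Real
open scoped NNReal ENNReal

lemma gaussianPDFReal_mul_eq (a b : ℝ≥0) (ha : a ≠ 0) (hb : b ≠ 0) (x z : ℝ) :
    gaussianPDFReal 0 a x * gaussianPDFReal 0 b (z - x)
      = gaussianPDFReal 0 (a + b) z * gaussianPDFReal ((a : ℝ) * z / (a + b)) (a * b / (a + b)) x := by
  have hva : (0:ℝ) < a := lt_of_le_of_ne (a.coe_nonneg) (by exact_mod_cast (Ne.symm ha))
  have hvb : (0:ℝ) < b := lt_of_le_of_ne (b.coe_nonneg) (by exact_mod_cast (Ne.symm hb))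
  have hab : (0:ℝ) < (a:ℝ) + b := by linarith
  have hu : ((a * b / (a + b) : ℝ≥0) : ℝ) = (a : ℝ) * b / ((a:ℝ) + b) := by
    push_cast; ring
  simp only [gaussianPDFReal, NNReal.coe_add, hu, sub_zero]
  rw [mul_mul_mul_comm, ← Real.exp_add, mul_mul_mul_comm, ← Real.exp_add]
  have hsqrt : Real.sqrt (2 * π * a) * Real.sqrt (2 * π * b)
      = Real.sqrt (2 * π * ((a:ℝ) + b)) * Real.sqrt (2 * π * ((a:ℝ) * b / ((a:ℝ) + b))) := by
    rw [← Real.sqrt_mul (by positivity), ← Real.sqrt_mul (by positivity)]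
    congr 1
    field_simp
  rw [← mul_inv, ← mul_inv, hsqrt]
  congr 1
  congr 1
  field_simp
  ring

lemma measurable_gaussianPDF_pair (b : ℝ≥0) :
    Measurable (fun p : ℝ × ℝ => gaussianPDF p.1 b p.2) := by
  apply Measurable.ennreal_ofReal
  simp only [gaussianPDFReal]
  fun_prop

lemma gaussianReal_conv (a b : ℝ≥0) :
    Measure.map (fun p : ℝ × ℝ => p.1 + p.2)
      ((gaussianReal 0 a).prod (gaussianReal 0 b)) = gaussianReal 0 (a + b) := by
  by_cases ha : a = 0
  · subst ha
    rw [gaussianReal_zero_var, Measure.dirac_prod,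
      Measure.map_map (by fun_prop) measurable_prodMk_left]
    simp only [Function.comp_def, zero_add]
    rw [Measure.map_id']
  by_cases hb : b = 0
  · subst hb
    rw [gaussianReal_zero_var, Measure.prod_dirac,
      Measure.map_map (by fun_prop) (by fun_prop)]
    simp only [Function.comp_def, add_zero]
    rw [Measure.map_id']
  have hab : a + b ≠ 0 := by simp [ha]
  ext s hs
  rw [Measure.map_apply (by fun_prop) hs,
    Measure.prod_apply (hs.preimage (by fun_prop))]
  have h1 : ∀ x : ℝ, (Prod.mk x ⁻¹' ((fun p : ℝ × ℝ => p.1 + p.2) ⁻¹' s))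
      = (fun y => x + y) ⁻¹' s := by intro x; rfl
  have h2 : ∀ x : ℝ, gaussianReal 0 b ((fun y => x + y) ⁻¹' s)
      = ∫⁻ z in s, gaussianPDF x b z := by
    intro x
    rw [← Measure.map_apply (by fun_prop) hs, gaussianReal_map_const_add, zero_add,
      gaussianReal_apply _ hb]
  simp_rw [h1, h2]
  rw [gaussianReal_of_var_ne_zero _ ha,
    lintegral_withDensity_eq_lintegral_mul _ (measurable_gaussianPDF 0 a)
      (by
        exact Measurable.lintegral_prod_right' (measurable_gaussianPDF_pair b))]
  simp only [Pi.mul_apply]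
  have h2' : ∀ x : ℝ, gaussianPDF 0 a x * ∫⁻ z in s, gaussianPDF x b z
      = ∫⁻ z in s, gaussianPDF 0 a x * gaussianPDF x b z := by
    intro x
    exact (lintegral_const_mul _ (measurable_gaussianPDF _ _)).symm
  simp_rw [h2']
  rw [lintegral_lintegral_swap]
  swap
  · apply Measurable.aemeasurable
    exact ((measurable_gaussianPDF 0 a).comp measurable_fst).mul
      (measurable_gaussianPDF_pair b)
  have h3 : ∀ z x : ℝ, gaussianPDF 0 a x * gaussianPDF x b z
      = gaussianPDF 0 (a + b) z * gaussianPDF ((a:ℝ) * z / (a + b)) (a * b / (a + b)) x := by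
    intro z x
    simp only [gaussianPDF]
    rw [← ENNReal.ofReal_mul (gaussianPDFReal_nonneg _ _ _),
      ← ENNReal.ofReal_mul (gaussianPDFReal_nonneg _ _ _)]
    congr 1
    have : gaussianPDFReal x b z = gaussianPDFReal 0 b (z - x) := by
      rw [gaussianPDFReal_sub, zero_add]
    rw [this]
    exact gaussianPDFReal_mul_eq a b ha hb x z
  simp_rw [h3]
  have h4 : ∀ z : ℝ, ∫⁻ x, gaussianPDF 0 (a + b) z
        * gaussianPDF ((a:ℝ) * z / (a + b)) (a * b / (a + b)) x
      = gaussianPDF 0 (a + b) z := by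
    intro z
    rw [lintegral_const_mul _ (measurable_gaussianPDF _ _),
      lintegral_gaussianPDF_eq_one _ (by
        simp only [ne_eq, div_eq_zero_iff, mul_eq_zero, not_or]
        exact ⟨⟨ha, hb⟩, hab⟩), mul_one]
  simp_rw [h4]
  rw [gaussianReal_apply _ hab]

lemma map_sum_pi_gaussian (v : ℝ≥0) : ∀ (n : ℕ) (c : Fin n → ℝ),
    Measure.map (fun y : Fin n → ℝ => ∑ j, c j * y j)
      (Measure.pi fun _ : Fin n => gaussianReal 0 v)
      = gaussianReal 0 (∑ j, Real.toNNReal ((c j)^2) * v) := by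
  intro n
  induction n with
  | zero =>
    intro c
    rw [show (fun y : Fin 0 → ℝ => ∑ j, c j * y j) = fun _ => (0:ℝ) by funext y; simp,
      Measure.map_const]
    simp
  | succ n ih =>
    intro c
    set e := MeasurableEquiv.piFinSuccAbove (fun _ : Fin (n+1) => ℝ) 0 with he
    have hmp := measurePreserving_piFinSuccAbove (fun _ : Fin (n+1) => gaussianReal 0 v) 0
    have hcomp : (fun y : Fin (n+1) → ℝ => ∑ j, c j * y j)
        = ((fun q : ℝ × ℝ => q.1 + q.2) ∘
          (Prod.map (fun x : ℝ => c 0 * x) (fun y : Fin n → ℝ => ∑ j, c (Fin.succ j) * y j))) ∘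
          e := by
      funext y
      simp [he, MeasurableEquiv.piFinSuccAbove_apply, Fin.sum_univ_succ, Fin.removeNth,
        Fin.succAbove_zero, Fin.tail]
    rw [hcomp, ← Measure.map_map (by fun_prop) e.measurable, hmp.map_eq,
      ← Measure.map_map (by fun_prop) (by fun_prop),
      ← Measure.map_prod_map _ _ (by fun_prop) (by fun_prop),
      ih, gaussianReal_map_const_mul, mul_zero, gaussianReal_conv]
    congr 1
    rw [Fin.sum_univ_succ]
    congr 1
    ext
    simp [Real.coe_toNNReal _ (sq_nonneg (c 0))]

lemma gaussianReal_abs_lt_le (V : ℝ≥0) (hV : V ≠ 0) (t : ℝ) (ht : 0 ≤ t) :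
    gaussianReal 0 V {r : ℝ | |r| < t} ≤ ENNReal.ofReal (2 * t / Real.sqrt (2 * π * V)) := by
  have hset : {r : ℝ | |r| < t} = Set.Ioo (-t) t := by
    ext r; simp [abs_lt]
  have hpdf : ∀ x : ℝ, gaussianPDF 0 V x ≤ ENNReal.ofReal ((Real.sqrt (2 * π * V))⁻¹) := by
    intro x
    apply ENNReal.ofReal_le_ofReal
    rw [gaussianPDFReal]
    nth_rewrite 2 [← mul_one (Real.sqrt (2 * π * (V:ℝ)))⁻¹]
    apply mul_le_mul_of_nonneg_left _ (by positivity)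
    exact Real.exp_le_one_iff.2 (by
      apply div_nonpos_of_nonpos_of_nonneg
      · simp [sq_nonneg]
      · positivity)
  rw [hset, gaussianReal_apply _ hV]
  calc ∫⁻ x in Set.Ioo (-t) t, gaussianPDF 0 V x
      ≤ ∫⁻ _ in Set.Ioo (-t) t, ENNReal.ofReal ((Real.sqrt (2 * π * V))⁻¹) :=
        lintegral_mono fun x => hpdf x
    _ = ENNReal.ofReal ((Real.sqrt (2 * π * V))⁻¹) * volume (Set.Ioo (-t) t) := by
        rw [MeasureTheory.setLIntegral_const]
    _ ≤ ENNReal.ofReal (2 * t / Real.sqrt (2 * π * V)) := by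
        rw [Real.volume_Ioo, ← ENNReal.ofReal_mul (by positivity)]
        apply ENNReal.ofReal_le_ofReal
        rw [div_eq_mul_inv]
        nlinarith [Real.sqrt_nonneg (2 * π * (V:ℝ)), abs_nonneg t]

lemma pi_eval_preimage {ι : Type*} [Fintype ι] [DecidableEq ι] {α : ι → Type*} [∀ i, MeasurableSpace (α i)]
    (μ : ∀ i, Measure (α i)) [∀ i, IsProbabilityMeasure (μ i)] (ℓ : ι) {s : Set (α ℓ)}
    (hs : MeasurableSet s) :
    Measure.pi μ (Function.eval ℓ ⁻¹' s) = μ ℓ s := by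
  rw [Set.eval_preimage, Measure.pi_pi]
  rw [Fintype.prod_eq_single ℓ (fun i hi => by simp [Function.update_of_ne hi])]
  simp

lemma quad_abs_le {n : ℕ} (A : Matrix (Fin n) (Fin n) ℝ) (y u : Fin n → ℝ) (δ : ℝ)
    (hrow : ∀ i, δ * ∑ j, |A i j| ≤ |∑ j, A i j * y j|)
    (hub : ∀ i, |u i| ≤ 2 * δ) :
    |∑ i, ∑ j, A i j * u i * u j| ≤ 2 * ∑ i, |u i| * |∑ j, A i j * y j| := by
  calc |∑ i, ∑ j, A i j * u i * u j| ≤ ∑ i, |∑ j, A i j * u i * u j| :=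
        Finset.abs_sum_le_sum_abs _ _
    _ ≤ ∑ i, |u i| * (2 * |∑ j, A i j * y j|) := by
        apply Finset.sum_le_sum; intro i _
        calc |∑ j, A i j * u i * u j| ≤ ∑ j, |A i j| * |u i| * |u j| := by
              refine (Finset.abs_sum_le_sum_abs _ _).trans (le_of_eq ?_)
              exact Finset.sum_congr rfl fun j _ => by rw [abs_mul, abs_mul]
          _ ≤ ∑ j, |A i j| * |u i| * (2 * δ) :=
              Finset.sum_le_sum fun j _ =>
                mul_le_mul_of_nonneg_left (hub j) (by positivity)
          _ = |u i| * (2 * (δ * ∑ j, |A i j|)) := by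
              rw [← Finset.sum_mul, ← Finset.sum_mul]; ring
          _ ≤ |u i| * (2 * |∑ j, A i j * y j|) := by
              apply mul_le_mul_of_nonneg_left _ (abs_nonneg _)
              linarith [hrow i]
    _ = 2 * ∑ i, |u i| * |∑ j, A i j * y j| := by
        rw [Finset.mul_sum]; apply Finset.sum_congr rfl; intro i _; ring

lemma quad_expand {n : ℕ} (A : Matrix (Fin n) (Fin n) ℝ) (hA : A.IsSymm)
    (y u x : Fin n → ℝ) (hx : ∀ i, x i = y i + u i) :
    ∑ i, ∑ j, A i j * x i * x j
      = (∑ i, ∑ j, A i j * y i * y j) + 2 * (∑ i, u i * ∑ j, A i j * y j)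
        + ∑ i, ∑ j, A i j * u i * u j := by
  have hsym : ∀ i j, A j i = A i j := fun i j => by
    conv_lhs => rw [← hA]
    rfl
  have cross : ∑ i, ∑ j, A i j * y i * u j = ∑ i, u i * ∑ j, A i j * y j := by
    rw [Finset.sum_comm]
    apply Finset.sum_congr rfl; intro j _
    rw [Finset.mul_sum]
    apply Finset.sum_congr rfl; intro i _
    rw [hsym i j]; ring
  have cross2 : ∑ i, ∑ j, A i j * u i * y j = ∑ i, u i * ∑ j, A i j * y j := by
    apply Finset.sum_congr rfl; intro i _
    rw [Finset.mul_sum]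
    apply Finset.sum_congr rfl; intro j _; ring
  have expand : ∑ i, ∑ j, A i j * x i * x j
      = (∑ i, ∑ j, A i j * y i * y j) + (∑ i, ∑ j, A i j * y i * u j)
        + (∑ i, ∑ j, A i j * u i * y j) + ∑ i, ∑ j, A i j * u i * u j := by
    rw [← Finset.sum_add_distrib, ← Finset.sum_add_distrib, ← Finset.sum_add_distrib]
    apply Finset.sum_congr rfl; intro i _
    rw [← Finset.sum_add_distrib, ← Finset.sum_add_distrib, ← Finset.sum_add_distrib]
    apply Finset.sum_congr rfl; intro j _
    rw [hx i, hx j]; ring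
  rw [expand, cross, cross2]; ring

lemma det_good {n : ℕ} (A : Matrix (Fin n) (Fin n) ℝ) (hA : A.IsSymm) (δ : ℝ) (hδ : 0 < δ)
    (y : Fin n → ℝ)
    (hrow : ∀ i, δ * ∑ j, |A i j| ≤ |∑ j, A i j * y j|) :
    (∀ (x : Fin n → ℝ) (z : ℝ),
        ‖x - (y - δ • (fun i => if 0 ≤ ∑ j, A i j * y j then (1 : ℝ) else -1))‖ ≤ δ →
        |z - ((∑ i, ∑ j, A i j * y i * y j) + δ)| ≤ δ →
        (∑ i, ∑ j, A i j * x i * x j) ≤ z) ∧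
    (∀ (x : Fin n → ℝ) (z : ℝ),
        ‖x - (y + δ • (fun i => if 0 ≤ ∑ j, A i j * y j then (1 : ℝ) else -1))‖ ≤ δ →
        |z - ((∑ i, ∑ j, A i j * y i * y j) - δ)| ≤ δ →
        z ≤ ∑ i, ∑ j, A i j * x i * x j) := by
  set s : Fin n → ℝ := fun i => if 0 ≤ ∑ j, A i j * y j then (1 : ℝ) else -1 with hs
  constructor
  · intro x z hx hz
    set u : Fin n → ℝ := fun i => x i - y i with hu
    have hcoord : ∀ i, |u i + δ * s i| ≤ δ := by
      intro i
      have h1 := norm_le_pi_norm (x - (y - δ • s)) i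
      have h2 : (x - (y - δ • s)) i = u i + δ * s i := by
        simp [hu, Pi.sub_apply, Pi.smul_apply, smul_eq_mul]; ring
      rw [h2] at h1
      exact (le_trans (le_of_eq (Real.norm_eq_abs _).symm) h1).trans hx
    have hub : ∀ i, |u i| ≤ 2 * δ := by
      intro i
      have := abs_le.mp (hcoord i)
      by_cases h : 0 ≤ ∑ j, A i j * y j <;>
        · simp only [hs, h, if_true, if_false, mul_one, mul_neg] at this
          rw [abs_le]; constructor <;> nlinarith [this.1, this.2]
    have hsign : ∀ i, u i * (∑ j, A i j * y j) = -(|u i| * |∑ j, A i j * y j|) := by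
      intro i
      have hc := abs_le.mp (hcoord i)
      by_cases h : 0 ≤ ∑ j, A i j * y j
      · simp only [hs, h, if_true, mul_one] at hc
        rw [abs_of_nonpos (by linarith [hc.2]), abs_of_nonneg h]; ring
      · simp only [hs, h, if_false, mul_neg, mul_one] at hc
        rw [abs_of_nonneg (by linarith [hc.1]), abs_of_nonpos (le_of_not_ge h)]; ring
    have hexp := quad_expand A hA y u x (fun i => by simp [hu])
    have hQ := quad_abs_le A y u δ hrow hub
    have hsum : ∑ i, u i * (∑ j, A i j * y j)
        = -∑ i, |u i| * |∑ j, A i j * y j| := by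
      rw [← Finset.sum_neg_distrib]
      exact Finset.sum_congr rfl fun i _ => hsign i
    have hzb := abs_le.mp hz
    have hQ' := (le_abs_self (∑ i, ∑ j, A i j * u i * u j)).trans hQ
    rw [hexp, hsum]
    linarith [hzb.1, hzb.2]
  · intro x z hx hz
    set u : Fin n → ℝ := fun i => x i - y i with hu
    have hcoord : ∀ i, |u i - δ * s i| ≤ δ := by
      intro i
      have h1 := norm_le_pi_norm (x - (y + δ • s)) i
      have h2 : (x - (y + δ • s)) i = u i - δ * s i := by
        simp [hu, Pi.sub_apply, Pi.smul_apply, smul_eq_mul]; ring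
      rw [h2] at h1
      exact (le_trans (le_of_eq (Real.norm_eq_abs _).symm) h1).trans hx
    have hub : ∀ i, |u i| ≤ 2 * δ := by
      intro i
      have := abs_le.mp (hcoord i)
      by_cases h : 0 ≤ ∑ j, A i j * y j <;>
        · simp only [hs, h, if_true, if_false, mul_one, mul_neg] at this
          rw [abs_le]; constructor <;> nlinarith [this.1, this.2]
    have hsign : ∀ i, u i * (∑ j, A i j * y j) = |u i| * |∑ j, A i j * y j| := by
      intro i
      have hc := abs_le.mp (hcoord i)
      by_cases h : 0 ≤ ∑ j, A i j * y j
      · simp only [hs, h, if_true, mul_one] at hc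
        rw [abs_of_nonneg (by linarith [hc.1]), abs_of_nonneg h]
      · simp only [hs, h, if_false, mul_neg, mul_one] at hc
        rw [abs_of_nonpos (by linarith [hc.2]), abs_of_nonpos (le_of_not_ge h)]; ring
    have hexp := quad_expand A hA y u x (fun i => by simp [hu])
    have hQ := quad_abs_le A y u δ hrow hub
    have hsum : ∑ i, u i * (∑ j, A i j * y j)
        = ∑ i, |u i| * |∑ j, A i j * y j| :=
      Finset.sum_congr rfl fun i _ => hsign i
    have hzb := abs_le.mp hz
    have hQ' := (neg_abs_le (∑ i, ∑ j, A i j * u i * u j)).trans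
      (le_abs_self _)
    have hQ'' : -(2 * ∑ i, |u i| * |∑ j, A i j * y j|)
        ≤ ∑ i, ∑ j, A i j * u i * u j := by
      have := abs_le.mp hQ
      linarith [this.1]
    rw [hexp, hsum]
    linarith [hzb.1, hzb.2]

lemma row_bad_bound {n : ℕ} (c : Fin n → ℝ) (hc : c ≠ 0) (δ ρ : ℝ) (hδ : 0 < δ)
    (hρ : 0 < ρ) :
    (Measure.pi fun _ : Fin n => gaussianReal 0 (Real.toNNReal (ρ ^ 2)))
        {y : Fin n → ℝ | |∑ j, c j * y j| < δ * ∑ j, |c j|}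
      ≤ ENNReal.ofReal (δ * Real.sqrt n / ρ) := by
  obtain ⟨j₀, hj₀⟩ : ∃ j, c j ≠ 0 := Function.ne_iff.mp hc
  set v := Real.toNNReal (ρ ^ 2) with hv
  have hvne : v ≠ 0 := by
    simp [hv, Real.toNNReal_eq_zero, not_le]
    positivity
  set t := δ * ∑ j, |c j| with htdef
  have ht : 0 < t := by
    apply mul_pos hδ
    apply Finset.sum_pos' (fun j _ => abs_nonneg _) ⟨j₀, Finset.mem_univ _, abs_pos.mpr hj₀⟩
  have hbad : {y : Fin n → ℝ | |∑ j, c j * y j| < t}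
      = (fun y : Fin n → ℝ => ∑ j, c j * y j) ⁻¹' {r : ℝ | |r| < t} := rfl
  have hms : MeasurableSet {r : ℝ | |r| < t} := by
    have : {r : ℝ | |r| < t} = Set.Ioo (-t) t := by ext r; simp [abs_lt]
    rw [this]; exact measurableSet_Ioo
  rw [hbad, ← Measure.map_apply (by fun_prop) hms, map_sum_pi_gaussian]
  set V := ∑ j, Real.toNNReal (c j ^ 2) * v with hV
  have hVne : V ≠ 0 := by
    intro h
    rw [hV, Finset.sum_eq_zero_iff] at h
    have := h j₀ (Finset.mem_univ _)
    rw [mul_eq_zero] at this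
    rcases this with h' | h'
    · rw [Real.toNNReal_eq_zero] at h'
      nlinarith [sq_abs (c j₀), abs_pos.mpr hj₀]
    · exact hvne h'
  refine (gaussianReal_abs_lt_le V hVne t ht.le).trans (ENNReal.ofReal_le_ofReal ?_)
  have hVreal : (V : ℝ) = (∑ j, c j ^ 2) * ρ ^ 2 := by
    rw [hV]
    push_cast
    rw [Finset.sum_mul]
    apply Finset.sum_congr rfl
    intro j _
    rw [Real.coe_toNNReal _ (sq_nonneg _), Real.coe_toNNReal _ (by positivity)]
  have hsum2 : (0:ℝ) < ∑ j, c j ^ 2 :=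
    Finset.sum_pos' (fun j _ => sq_nonneg _) ⟨j₀, Finset.mem_univ _, by positivity⟩
  have hcs : (∑ j, |c j|) ^ 2 ≤ (n : ℝ) * ∑ j, c j ^ 2 := by
    have h := Finset.sum_mul_sq_le_sq_mul_sq Finset.univ (fun _ : Fin n => (1:ℝ))
      (fun j => |c j|)
    simpa [sq_abs] using h
  have h1 : ∑ j, |c j| ≤ Real.sqrt n * Real.sqrt (∑ j, c j ^ 2) := by
    rw [← Real.sqrt_mul (by positivity)]
    apply Real.le_sqrt' ?_ |>.mpr ?_
    · exact Finset.sum_pos' (fun j _ => abs_nonneg _)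
        ⟨j₀, Finset.mem_univ _, abs_pos.mpr hj₀⟩
    · exact hcs
  have h2pi : 2 ≤ Real.sqrt (2 * π) := by
    apply (Real.le_sqrt' (by norm_num)).mpr
    nlinarith [Real.pi_gt_three]
  have hsq : Real.sqrt (2 * π * (V:ℝ))
      = Real.sqrt (2 * π) * (Real.sqrt (∑ j, c j ^ 2) * ρ) := by
    rw [hVreal, Real.sqrt_mul (by positivity), Real.sqrt_mul hsum2.le, Real.sqrt_sq hρ.le]
  rw [hsq, htdef, div_le_div_iff₀ (by positivity) hρ]
  have hs2 : 0 < Real.sqrt (∑ j, c j ^ 2) := Real.sqrt_pos.mpr hsum2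
  have hsn : 0 ≤ Real.sqrt n := Real.sqrt_nonneg _
  nlinarith [mul_le_mul_of_nonneg_left h1 (by positivity : (0:ℝ) ≤ 2 * δ * ρ),
    mul_le_mul_of_nonneg_left h2pi
      (by positivity : (0:ℝ) ≤ δ * Real.sqrt n * Real.sqrt (∑ j, c j ^ 2) * ρ)]

/-- There is a universal constant `C > 0` such that for all `n, m ≥ 1`,
`δ > 0`, `η ∈ (0,1)`, a symmetric matrix `A` with zero diagonal whose rows are all
nonzero, and `ρ ≥ C·δ·n^{3/2}·m/η`: if `x⁽¹⁾, …, x⁽ᵐ⁾` are independent `N(0,ρ²)ⁿ`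
vectors and `s⁽ˡ⁾ᵢ = sgn(⟨Aᵢ, x⁽ˡ⁾⟩)`, then with probability at least `1 − η`, for
every `ℓ`: `z ≥ xᵀAx` on the ℓ∞ ball of radius `δ` around
`(x⁽ˡ⁾ − δs⁽ˡ⁾, p(x⁽ˡ⁾) + δ)` and `z ≤ xᵀAx` on the ℓ∞ ball of radius `δ` around
`(x⁽ˡ⁾ + δs⁽ˡ⁾, p(x⁽ˡ⁾) − δ)`, where `p(x) = xᵀAx`. `Fin n → ℝ` carries the sup
norm. -/
theorem stmt_11 : ∃ C : ℝ, 0 < C ∧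
    ∀ (n m : ℕ), 1 ≤ n → 1 ≤ m → ∀ δ η ρ : ℝ, 0 < δ → 0 < η → η < 1 →
    ∀ A : Matrix (Fin n) (Fin n) ℝ, A.IsSymm → (∀ i, A i i = 0) → (∀ i, A i ≠ 0) →
    C * δ * (n : ℝ) ^ ((3 : ℝ) / 2) * m / η ≤ ρ →
    (1 : ℝ) - η ≤
      ((Measure.pi fun _ : Fin m =>
          Measure.pi fun _ : Fin n => gaussianReal 0 (Real.toNNReal (ρ ^ 2)))
        {X : Fin m → Fin n → ℝ | ∀ ℓ : Fin m,
          (∀ (x : Fin n → ℝ) (z : ℝ),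
            ‖x - (X ℓ - δ • (fun i => if 0 ≤ ∑ j, A i j * X ℓ j then (1 : ℝ) else -1))‖
              ≤ δ →
            |z - ((∑ i, ∑ j, A i j * X ℓ i * X ℓ j) + δ)| ≤ δ →
            (∑ i, ∑ j, A i j * x i * x j) ≤ z) ∧
          (∀ (x : Fin n → ℝ) (z : ℝ),
            ‖x - (X ℓ + δ • (fun i => if 0 ≤ ∑ j, A i j * X ℓ j then (1 : ℝ) else -1))‖
              ≤ δ →
            |z - ((∑ i, ∑ j, A i j * X ℓ i * X ℓ j) - δ)| ≤ δ →
            z ≤ ∑ i, ∑ j, A i j * x i * x j)}).toReal := by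
  refine ⟨1, one_pos, ?_⟩
  intro n m hn hm δ η ρ hδ hη hη1 A hsymm hdiag hrows hρ
  have hnpos : (0:ℝ) < n := by exact_mod_cast hn
  have hmpos : (0:ℝ) < m := by exact_mod_cast hm
  have hρ0 : 0 < ρ := by
    refine lt_of_lt_of_le ?_ hρ
    have := Real.rpow_pos_of_pos hnpos ((3:ℝ)/2)
    positivity
  set v := Real.toNNReal (ρ ^ 2) with hv
  set P := Measure.pi fun _ : Fin n => gaussianReal 0 v with hP
  set PM := Measure.pi fun _ : Fin m => P with hPM
  set G : Set (Fin m → Fin n → ℝ) :=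
    {X | ∀ ℓ : Fin m, ∀ i : Fin n, δ * ∑ j, |A i j| ≤ |∑ j, A i j * X ℓ j|} with hG
  have hsub : G ⊆ {X : Fin m → Fin n → ℝ | ∀ ℓ : Fin m,
      (∀ (x : Fin n → ℝ) (z : ℝ),
        ‖x - (X ℓ - δ • (fun i => if 0 ≤ ∑ j, A i j * X ℓ j then (1 : ℝ) else -1))‖ ≤ δ →
        |z - ((∑ i, ∑ j, A i j * X ℓ i * X ℓ j) + δ)| ≤ δ →
        (∑ i, ∑ j, A i j * x i * x j) ≤ z) ∧
      (∀ (x : Fin n → ℝ) (z : ℝ),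
        ‖x - (X ℓ + δ • (fun i => if 0 ≤ ∑ j, A i j * X ℓ j then (1 : ℝ) else -1))‖ ≤ δ →
        |z - ((∑ i, ∑ j, A i j * X ℓ i * X ℓ j) - δ)| ≤ δ →
        z ≤ ∑ i, ∑ j, A i j * x i * x j)} := by
    intro X hX ℓ
    exact det_good A hsymm δ hδ (X ℓ) (hX ℓ)
  have hGm : MeasurableSet G := by
    have hGeq : G = ⋂ ℓ : Fin m, ⋂ i : Fin n,
        {X : Fin m → Fin n → ℝ | δ * ∑ j, |A i j| ≤ |∑ j, A i j * X ℓ j|} := by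
      ext X; simp [hG]
    rw [hGeq]
    refine MeasurableSet.iInter fun ℓ => MeasurableSet.iInter fun i => ?_
    have hmeas : Measurable fun X : Fin m → Fin n → ℝ => |∑ j, A i j * X ℓ j| := by
      fun_prop
    exact measurableSet_le measurable_const hmeas
  have hbadm : ∀ i : Fin n, MeasurableSet
      {y : Fin n → ℝ | |∑ j, A i j * y j| < δ * ∑ j, |A i j|} := by
    intro i
    have hmeas : Measurable fun y : Fin n → ℝ => |∑ j, A i j * y j| := by fun_prop
    exact measurableSet_lt hmeas measurable_const
  have hbad : PM Gᶜ ≤ ENNReal.ofReal η := by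
    have hGc : Gᶜ ⊆ ⋃ ℓ : Fin m, ⋃ i : Fin n, Function.eval ℓ ⁻¹'
        {y : Fin n → ℝ | |∑ j, A i j * y j| < δ * ∑ j, |A i j|} := by
      intro X hX
      simp only [hG, Set.mem_compl_iff, Set.mem_setOf_eq, not_forall, not_le] at hX
      obtain ⟨ℓ, i, h⟩ := hX
      exact Set.mem_iUnion.2 ⟨ℓ, Set.mem_iUnion.2 ⟨i, h⟩⟩
    calc PM Gᶜ ≤ ∑ ℓ : Fin m, ∑ i : Fin n, PM (Function.eval ℓ ⁻¹'
          {y : Fin n → ℝ | |∑ j, A i j * y j| < δ * ∑ j, |A i j|}) := by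
          refine (measure_mono hGc).trans ?_
          refine (measure_iUnion_fintype_le _ _).trans ?_
          exact Finset.sum_le_sum fun ℓ _ => measure_iUnion_fintype_le _ _
      _ ≤ ∑ _ℓ : Fin m, ∑ _i : Fin n, ENNReal.ofReal (δ * Real.sqrt n / ρ) := by
          refine Finset.sum_le_sum fun ℓ _ => Finset.sum_le_sum fun i _ => ?_
          rw [hPM, pi_eval_preimage _ ℓ (hbadm i), hP, hv]
          exact row_bad_bound (A i) (hrows i) δ ρ hδ hρ0
      _ = (m * n : ℕ) * ENNReal.ofReal (δ * Real.sqrt n / ρ) := by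
          simp [Finset.sum_const, mul_assoc]
      _ ≤ ENNReal.ofReal η := by
          rw [show ((m * n : ℕ) : ℝ≥0∞) = ENNReal.ofReal ((m : ℝ) * n) by
              rw [show ((m:ℝ) * n) = ((m * n : ℕ) : ℝ) by push_cast; ring,
                ENNReal.ofReal_natCast]]
          rw [← ENNReal.ofReal_mul (by positivity)]
          apply ENNReal.ofReal_le_ofReal
          have h32 : (n:ℝ) ^ ((3:ℝ)/2) = n * Real.sqrt n := by
            rw [show ((3:ℝ)/2) = 1 + 1/2 by norm_num, Real.rpow_add hnpos, Real.rpow_one,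
              ← Real.sqrt_eq_rpow]
          have hkey : δ * ((n:ℝ) * Real.sqrt n) * m ≤ ρ * η := by
            rw [one_mul, h32] at hρ
            have := (div_le_iff₀ hη).mp hρ
            linarith
          rw [show (m:ℝ) * n * (δ * Real.sqrt n / ρ) = δ * ((n:ℝ) * Real.sqrt n) * m / ρ by
              ring]
          rw [div_le_iff₀ hρ0]
          linarith
  have h2 : PM Gᶜ = 1 - PM G := prob_compl_eq_one_sub hGm
  have hle1 : PM G ≤ 1 := prob_le_one
  have h1 : (PM G).toReal = 1 - (PM Gᶜ).toReal := by
    rw [h2, ENNReal.toReal_sub_of_le hle1 ENNReal.one_ne_top]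
    simp
  have hmono : (PM G).toReal ≤ (PM _).toReal :=
    ENNReal.toReal_mono (measure_ne_top _ _) (measure_mono hsub)
  have hbadR : (PM Gᶜ).toReal ≤ η := by
    refine (ENNReal.toReal_mono ENNReal.ofReal_ne_top hbad).trans ?_
    rw [ENNReal.toReal_ofReal hη.le]
  linarith [hmono, h1, hbadR]
end

section
/- Let n ≥ 1, let A* ∈ ℝ^{n×n} be a nonzero symmetric matrix with zero diagonal, let ρ > 0, and let m > (n+1)². Let x^{(1)}, …, x^{(m)} be independent random vectors each distributed as N(0,ρ²)ⁿ, and set z^{(ℓ)} = (x^{(ℓ)})ᵀ A* x^{(ℓ)}. Then almost surely the following holds: every polynomial q in n+1 real variables (x₁,…,x_n,z) of total degree at most 2 satisfying q(x^{(ℓ)}, z^{(ℓ)}) = 0 for all ℓ ∈ [m] is of the form q(x, z) = C·(z − xᵀA*x) for some constant C ∈ ℝ. -/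
open MeasureTheory ProbabilityTheory

/-- The general polynomial of total degree at most 2 in the `n+1` variables `(x, z)`:
`q(x,z) = xᵀBx + b₁·x + c₁ + z·(b₂·x) + c₂z² + c₃z`. -/
noncomputable def deg2Poly {n : ℕ} (B : Matrix (Fin n) (Fin n) ℝ)
    (b₁ b₂ : Fin n → ℝ) (c₁ c₂ c₃ : ℝ) (x : Fin n → ℝ) (z : ℝ) : ℝ :=
  (∑ i, ∑ j, B i j * x i * x j) + (∑ i, b₁ i * x i) + c₁ +
    z * (∑ i, b₂ i * x i) + c₂ * z ^ 2 + c₃ * z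


lemma ae_eval_ne_zero_fin (ν : Measure ℝ) [IsProbabilityMeasure ν] (hν : ν ≪ volume) :
    ∀ (k : ℕ) (Q : MvPolynomial (Fin k) ℝ), Q ≠ 0 →
      ∀ᵐ x ∂(Measure.pi fun _ : Fin k => ν), MvPolynomial.eval x Q ≠ 0 := by
  intro k
  induction k with
  | zero =>
    intro Q hQ
    refine Filter.Eventually.of_forall fun x => fun h => hQ ?_
    rw [MvPolynomial.eq_C_of_isEmpty Q] at h ⊢
    rw [MvPolynomial.eval_C] at h
    rw [h, map_zero]
  | succ k IH =>
    intro Q hQ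
    -- the polynomial in the first variable
    set P : Polynomial (MvPolynomial (Fin k) ℝ) := MvPolynomial.finSuccEquiv ℝ k Q with hP
    have hPne : P ≠ 0 := by
      intro h
      apply hQ
      have := congrArg (MvPolynomial.finSuccEquiv ℝ k).symm (hP ▸ h)
      simpa using this
    have hlead : P.leadingCoeff ≠ 0 := Polynomial.leadingCoeff_ne_zero.mpr hPne
    have h1 : ∀ᵐ z ∂(Measure.pi fun _ : Fin k => ν), ∀ᵐ t ∂ν,
        MvPolynomial.eval (Fin.cons t z) Q ≠ 0 := by
      filter_upwards [IH P.leadingCoeff hlead] with z hz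
      have hmapne : (P.map (MvPolynomial.eval z)) ≠ 0 := by
        intro h
        apply hz
        have := congrArg (fun q => Polynomial.coeff q P.natDegree) h
        simpa [Polynomial.coeff_map] using this
      have hfin : Set.Finite {t : ℝ | Polynomial.eval t (P.map (MvPolynomial.eval z)) = 0} :=
        Polynomial.finite_setOf_isRoot hmapne
      have hvol : volume {t : ℝ | Polynomial.eval t (P.map (MvPolynomial.eval z)) = 0} = 0 :=
        hfin.countable.measure_zero _
      have hν0 : ν {t : ℝ | Polynomial.eval t (P.map (MvPolynomial.eval z)) = 0} = 0 :=
        hν hvol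
      rw [ae_iff]
      convert hν0 using 2
      ext t
      simp only [Set.mem_setOf_eq, not_not]
      rw [MvPolynomial.eval_eq_eval_mv_eval' z t Q]
    -- measurability
    have hcont : Continuous fun y : ℝ × (Fin k → ℝ) =>
        MvPolynomial.eval (Fin.cons y.1 y.2 : Fin (k+1) → ℝ) Q := by
      refine (MvPolynomial.continuous_eval Q).comp ?_
      apply continuous_pi
      intro i
      refine Fin.cases ?_ (fun j => ?_) i
      · simpa using continuous_fst
      · simp only [Fin.cons_succ]; exact (continuous_apply j).comp continuous_snd
    have hms : MeasurableSet {y : ℝ × (Fin k → ℝ) |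
        MvPolynomial.eval (Fin.cons y.1 y.2 : Fin (k+1) → ℝ) Q ≠ 0} :=
      (hcont.measurable (measurableSet_singleton 0)).compl
    have h2 : ∀ᵐ y ∂(ν.prod (Measure.pi fun _ : Fin k => ν)),
        MvPolynomial.eval (Fin.cons y.1 y.2 : Fin (k+1) → ℝ) Q ≠ 0 := by
      rw [MeasureTheory.Measure.ae_prod_iff_ae_ae hms,
        MeasureTheory.Measure.ae_ae_comm hms]
      exact h1
    -- transfer along the measurable equivalence
    have hmp := measurePreserving_piFinSuccAbove (fun _ : Fin (k+1) => ν) 0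
    rw [ae_iff]
    have hpre : {x : Fin (k+1) → ℝ | ¬ MvPolynomial.eval x Q ≠ 0} =
        (MeasurableEquiv.piFinSuccAbove (fun _ => ℝ) 0) ⁻¹'
          {y : ℝ × (Fin k → ℝ) |
            MvPolynomial.eval (Fin.cons y.1 y.2 : Fin (k+1) → ℝ) Q = 0} := by
      ext x
      simp only [Set.mem_setOf_eq, Set.mem_preimage, not_not,
        MeasurableEquiv.piFinSuccAbove_apply, Fin.insertNthEquiv,
        Equiv.coe_fn_symm_mk, Fin.removeNth]
      have hx : (Fin.cons (x 0) (Fin.removeNth 0 x) : Fin (k+1) → ℝ) = x := by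
        rw [Fin.removeNth_zero]
        exact Fin.cons_self_tail x
      rw [hx]
    have hms' : MeasurableSet {y : ℝ × (Fin k → ℝ) |
        MvPolynomial.eval (Fin.cons y.1 y.2 : Fin (k+1) → ℝ) Q = 0} :=
      hcont.measurable (measurableSet_singleton 0)
    rw [hpre, hmp.measure_preimage hms'.nullMeasurableSet]
    have h2' := h2
    rw [ae_iff] at h2'
    simpa using h2'

lemma ae_eval_ne_zero (ν : Measure ℝ) [IsProbabilityMeasure ν] (hν : ν ≪ volume)
    {σ : Type*} [Fintype σ] (Q : MvPolynomial σ ℝ) (hQ : Q ≠ 0) :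
    ∀ᵐ x ∂(Measure.pi fun _ : σ => ν), MvPolynomial.eval x Q ≠ 0 := by
  set e : Fin (Fintype.card σ) ≃ σ := (Fintype.equivFin σ).symm with he
  have hQ' : MvPolynomial.rename ⇑e.symm Q ≠ 0 := by
    intro h
    exact hQ (MvPolynomial.rename_injective _ e.symm.injective (by simpa using h))
  have key := ae_eval_ne_zero_fin ν hν _ _ hQ'
  have hmp := measurePreserving_piCongrLeft (fun _ : σ => ν) e
  have hms : MeasurableSet {y : σ → ℝ | MvPolynomial.eval y Q = 0} :=
    (MvPolynomial.continuous_eval Q).measurable (measurableSet_singleton 0)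
  rw [ae_iff]
  have : {y : σ → ℝ | ¬ MvPolynomial.eval y Q ≠ 0} = {y | MvPolynomial.eval y Q = 0} := by
    ext y; simp
  rw [this, ← hmp.measure_preimage hms.nullMeasurableSet]
  have hpre : (⇑(MeasurableEquiv.piCongrLeft (fun _ : σ => ℝ) e)) ⁻¹'
      {y | MvPolynomial.eval y Q = 0} =
      {x : Fin (Fintype.card σ) → ℝ |
        MvPolynomial.eval x (MvPolynomial.rename ⇑e.symm Q) = 0} := by
    ext x
    simp only [Set.mem_preimage, Set.mem_setOf_eq, MvPolynomial.eval_rename]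
    have hfn : (⇑(MeasurableEquiv.piCongrLeft (fun _ : σ => ℝ) e)) x = x ∘ ⇑e.symm := by
      funext s
      conv_lhs => rw [← e.apply_symm_apply s]
      rw [MeasurableEquiv.piCongrLeft_apply_apply]
      rfl
    rw [hfn]
  rw [hpre]
  rw [ae_iff] at key
  simpa using key

lemma ae_eval_ne_zero_curry (ν : Measure ℝ) [IsProbabilityMeasure ν] (hν : ν ≪ volume)
    {m n : ℕ} (Q : MvPolynomial (Fin m × Fin n) ℝ) (hQ : Q ≠ 0) :
    ∀ᵐ X ∂(Measure.pi fun _ : Fin m => Measure.pi fun _ : Fin n => ν),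
      MvPolynomial.eval (fun p : Fin m × Fin n => X p.1 p.2) Q ≠ 0 := by
  set T : (Fin m → Fin n → ℝ) → (Fin m × Fin n → ℝ) := fun X p => X p.1 p.2 with hT
  have hTm : Measurable T :=
    measurable_pi_lambda _ fun p => (measurable_pi_apply p.2).comp (measurable_pi_apply p.1)
  have hmap : Measure.map T (Measure.pi fun _ : Fin m => Measure.pi fun _ : Fin n => ν) =
      Measure.pi (fun _ : Fin m × Fin n => ν) := by
    refine (Measure.pi_eq ?_).symm
    intro s hs
    rw [Measure.map_apply hTm (MeasurableSet.univ_pi hs)]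
    have hset : T ⁻¹' (Set.univ.pi s) =
        Set.univ.pi (fun ℓ : Fin m => Set.univ.pi fun i : Fin n => s (ℓ, i)) := by
      ext X
      simp [Set.mem_pi, T, Prod.forall]
    rw [hset, Measure.pi_pi]
    simp_rw [Measure.pi_pi]
    exact (Fintype.prod_prod_type (fun p : Fin m × Fin n => ν (s p))).symm
  have hmp : MeasurePreserving T
      (Measure.pi fun _ : Fin m => Measure.pi fun _ : Fin n => ν)
      (Measure.pi (fun _ : Fin m × Fin n => ν)) := ⟨hTm, hmap⟩
  have key := ae_eval_ne_zero ν hν Q hQ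
  have hms : MeasurableSet {y : Fin m × Fin n → ℝ | MvPolynomial.eval y Q = 0} :=
    (MvPolynomial.continuous_eval Q).measurable (measurableSet_singleton 0)
  rw [ae_iff]
  have hre : {X : Fin m → Fin n → ℝ |
      ¬ MvPolynomial.eval (fun p : Fin m × Fin n => X p.1 p.2) Q ≠ 0} =
      T ⁻¹' {y | MvPolynomial.eval y Q = 0} := by
    ext X; simp [T]
  rw [hre, hmp.measure_preimage hms.nullMeasurableSet]
  rw [ae_iff] at key
  simpa using key

open MeasureTheory ProbabilityTheory MvPolynomial

def sfun {n : ℕ} (A : Matrix (Fin n) (Fin n) ℝ) (x : Fin n → ℝ) : ℝ :=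
  ∑ i, ∑ j, A i j * x i * x j

abbrev PairLE (n : ℕ) := {p : Fin n × Fin n // p.1 ≤ p.2}

abbrev BIdx (n : ℕ) := Unit ⊕ (Fin n ⊕ (PairLE n ⊕ (Fin n ⊕ Unit)))

noncomputable def bfun {n : ℕ} (A : Matrix (Fin n) (Fin n) ℝ) :
    BIdx n → (Fin n → ℝ) → ℝ
  | .inl _ => fun _ => 1
  | .inr (.inl i) => fun x => x i
  | .inr (.inr (.inl p)) => fun x => x p.1.1 * x p.1.2
  | .inr (.inr (.inr (.inl i))) => fun x => sfun A x * x i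
  | .inr (.inr (.inr (.inr _))) => fun x => sfun A x ^ 2

noncomputable def spoly {n : ℕ} (A : Matrix (Fin n) (Fin n) ℝ) :
    MvPolynomial (Fin n) ℝ :=
  ∑ i, ∑ j, MvPolynomial.C (A i j) * MvPolynomial.X i * MvPolynomial.X j

noncomputable def bpoly {n : ℕ} (A : Matrix (Fin n) (Fin n) ℝ) :
    BIdx n → MvPolynomial (Fin n) ℝ
  | .inl _ => 1
  | .inr (.inl i) => MvPolynomial.X i
  | .inr (.inr (.inl p)) => MvPolynomial.X p.1.1 * MvPolynomial.X p.1.2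
  | .inr (.inr (.inr (.inl i))) => spoly A * MvPolynomial.X i
  | .inr (.inr (.inr (.inr _))) => spoly A ^ 2

lemma eval_spoly {n : ℕ} (A : Matrix (Fin n) (Fin n) ℝ) (x : Fin n → ℝ) :
    MvPolynomial.eval x (spoly A) = sfun A x := by
  simp [spoly, sfun]

lemma eval_bpoly {n : ℕ} (A : Matrix (Fin n) (Fin n) ℝ) (i : BIdx n) (x : Fin n → ℝ) :
    MvPolynomial.eval x (bpoly A i) = bfun A i x := by
  rcases i with ⟨⟩ | i | p | i | ⟨⟩ <;>
    simp [bpoly, bfun, eval_spoly]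

lemma sfun_smul {n : ℕ} (A : Matrix (Fin n) (Fin n) ℝ) (t : ℝ) (x : Fin n → ℝ) :
    sfun A (fun k => t * x k) = t ^ 2 * sfun A x := by
  unfold sfun
  rw [Finset.mul_sum]
  refine Finset.sum_congr rfl fun i _ => ?_
  rw [Finset.mul_sum]
  refine Finset.sum_congr rfl fun j _ => ?_
  ring

lemma sum_single {n : ℕ} (i : Fin n) (F : Fin n → ℝ) :
    ∑ k, F k * (if k = i then (1:ℝ) else 0) = F i := by
  simp [mul_ite, Finset.sum_ite_eq']

lemma sum_pair {n : ℕ} (i j : Fin n) (F : Fin n → ℝ) :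
    ∑ k, F k * ((if k = i then (1:ℝ) else 0) + (if k = j then 1 else 0)) = F i + F j := by
  simp [mul_add, Finset.sum_add_distrib, mul_ite, Finset.sum_ite_eq']

lemma sfun_pair {n : ℕ} (M : Matrix (Fin n) (Fin n) ℝ) (i j : Fin n) :
    sfun M (fun k => (if k = i then (1:ℝ) else 0) + (if k = j then 1 else 0)) =
      M i i + M i j + (M j i + M j j) := by
  unfold sfun
  set v : Fin n → ℝ := fun k => (if k = i then (1:ℝ) else 0) + (if k = j then 1 else 0) with hv
  have h1 : ∀ k, ∑ l, M k l * v k * v l = (∑ l, M k l * v l) * v k := by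
    intro k
    rw [Finset.sum_mul]
    exact Finset.sum_congr rfl fun l _ => by ring
  calc ∑ k, ∑ l, M k l * v k * v l = ∑ k, (∑ l, M k l * v l) * v k :=
        Finset.sum_congr rfl fun k _ => h1 k
    _ = (∑ l, M i l * v l) + (∑ l, M j l * v l) := sum_pair i j _
    _ = (M i i + M i j) + (M j i + M j j) := by
        rw [sum_pair i j (fun l => M i l), sum_pair i j (fun l => M j l)]

open MeasureTheory ProbabilityTheory MvPolynomial

lemma quartic_coeffs {a₀ a₁ a₂ a₃ a₄ : ℝ}
    (h : ∀ t : ℝ, a₀ + a₁ * t + a₂ * t ^ 2 + a₃ * t ^ 3 + a₄ * t ^ 4 = 0) :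
    a₀ = 0 ∧ a₁ = 0 ∧ a₂ = 0 ∧ a₃ = 0 ∧ a₄ = 0 := by
  set p : Polynomial ℝ := Polynomial.C a₀ + Polynomial.C a₁ * Polynomial.X +
    Polynomial.C a₂ * Polynomial.X ^ 2 + Polynomial.C a₃ * Polynomial.X ^ 3 +
    Polynomial.C a₄ * Polynomial.X ^ 4 with hp
  have hp0 : p = 0 := by
    apply Polynomial.funext
    intro t
    simp only [hp, Polynomial.eval_add, Polynomial.eval_mul, Polynomial.eval_pow,
      Polynomial.eval_C, Polynomial.eval_X, Polynomial.eval_zero]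
    exact h t
  refine ⟨?_, ?_, ?_, ?_, ?_⟩ <;>
  · have := congrArg (fun q => Polynomial.coeff q 0) hp0
    have h1 := congrArg (fun q => Polynomial.coeff q 1) hp0
    have h2 := congrArg (fun q => Polynomial.coeff q 2) hp0
    have h3 := congrArg (fun q => Polynomial.coeff q 3) hp0
    have h4 := congrArg (fun q => Polynomial.coeff q 4) hp0
    simp only [hp, Polynomial.coeff_add, Polynomial.coeff_C_mul, Polynomial.coeff_X_pow,
      Polynomial.coeff_C, Polynomial.coeff_zero, Polynomial.coeff_X_one, Polynomial.coeff_X,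
      mul_ite, mul_one, mul_zero] at this h1 h2 h3 h4
    norm_num at this h1 h2 h3 h4
    first
    | exact this | exact h1 | exact h2 | exact h3 | exact h4

/-- For a linearly independent family of functions there are points making the
evaluation matrix invertible. -/
lemma exists_eval_matrix_det_ne_zero {α : Type*} [Nonempty α] :
    ∀ (r : ℕ) (f : Fin r → α → ℝ), LinearIndependent ℝ f →
      ∃ y : Fin r → α, (Matrix.of fun i j => f i (y j)).det ≠ 0 := by
  intro r
  induction r with
  | zero =>
    intro f _
    exact ⟨finZeroElim, by simp [Matrix.det_fin_zero]⟩
  | succ r IH =>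
    intro f hf
    obtain ⟨y', hy'⟩ := IH (f ∘ Fin.castSucc) (hf.comp _ (Fin.castSucc_injective r))
    set g : α → ℝ := fun a => (Matrix.of fun i j : Fin (r+1) => f i ((Fin.snoc y' a : Fin (r+1) → α) j)).det with hg
    set c : Fin (r + 1) → ℝ := fun i =>
      (-1) ^ ((i : ℕ) + (Fin.last r : ℕ)) *
        (Matrix.of (fun i' j' : Fin (r+1) => f i' ((Fin.snoc y' (Classical.arbitrary α) : Fin (r+1) → α) j')) |>.submatrix
          i.succAbove (Fin.last r).succAbove).det with hc
    -- expansion of g along the last column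
    have hexp : ∀ a : α, g a = ∑ i : Fin (r + 1), c i * f i a := by
      intro a
      rw [hg]
      simp only
      rw [Matrix.det_succ_column _ (Fin.last r)]
      apply Finset.sum_congr rfl
      intro i _
      have h1 : (Matrix.of fun i' j' : Fin (r+1) => f i' ((Fin.snoc y' a : Fin (r+1) → α) j')) i (Fin.last r)
          = f i a := by simp
      have h2 : ((Matrix.of fun i' j' : Fin (r+1) => f i' ((Fin.snoc y' a : Fin (r+1) → α) j')).submatrix
            i.succAbove (Fin.last r).succAbove) =
          ((Matrix.of fun i' j' : Fin (r+1) => f i' ((Fin.snoc y' (Classical.arbitrary α) : Fin (r+1) → α) j')).submatrix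
            i.succAbove (Fin.last r).succAbove) := by
        ext p q
        simp [Matrix.submatrix_apply, Fin.succAbove_last]
      rw [h1, h2, hc]
      ring
    have hclast : c (Fin.last r) ≠ 0 := by
      rw [hc]
      simp only
      apply mul_ne_zero
      · exact pow_ne_zero _ (by norm_num)
      · convert hy' using 2
        ext p q
        simp [Matrix.submatrix_apply, Fin.succAbove_last]
    have hex : ∃ a : α, g a ≠ 0 := by
      by_contra hcon
      push_neg at hcon
      have : ∀ i, c i = 0 := by
        rw [Fintype.linearIndependent_iff] at hf
        apply hf
        funext a
        simp only [Finset.sum_apply, Pi.smul_apply, smul_eq_mul, Pi.zero_apply]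
        rw [← hexp a]
        exact hcon a
      exact hclast (this _)
    obtain ⟨a, ha⟩ := hex
    exact ⟨Fin.snoc y' a, ha⟩

lemma bfun_indep {n : ℕ} (A : Matrix (Fin n) (Fin n) ℝ) (x₀ : Fin n → ℝ)
    (hx₀ : sfun A x₀ ≠ 0) : LinearIndependent ℝ (bfun A) := by
  rw [Fintype.linearIndependent_iff]
  intro g hg
  have hpt : ∀ x : Fin n → ℝ,
      g (.inl ()) + ((∑ i, g (.inr (.inl i)) * x i) +
        ((∑ p : PairLE n, g (.inr (.inr (.inl p))) * (x p.1.1 * x p.1.2)) +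
          ((∑ i, g (.inr (.inr (.inr (.inl i)))) * (sfun A x * x i)) +
            g (.inr (.inr (.inr (.inr ())))) * sfun A x ^ 2))) = 0 := by
    intro x
    have h := congrFun hg x
    simp only [Finset.sum_apply, Pi.smul_apply, smul_eq_mul, Pi.zero_apply] at h
    rw [Fintype.sum_sum_type] at h
    simp only [Fintype.sum_sum_type] at h
    simpa [bfun] using h
  have hsep : ∀ x : Fin n → ℝ,
      (g (.inl ()) = 0) ∧ ((∑ i, g (.inr (.inl i)) * x i) = 0) ∧
      ((∑ p : PairLE n, g (.inr (.inr (.inl p))) * (x p.1.1 * x p.1.2)) = 0) ∧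
      ((sfun A x * ∑ i, g (.inr (.inr (.inr (.inl i)))) * x i) = 0) ∧
      (g (.inr (.inr (.inr (.inr ())))) * sfun A x ^ 2 = 0) := by
    intro x
    apply quartic_coeffs
    intro t
    have h := hpt (fun k => t * x k)
    have e1 : ∑ i, g (.inr (.inl i)) * (t * x i) = (∑ i, g (.inr (.inl i)) * x i) * t := by
      rw [Finset.sum_mul]; exact Finset.sum_congr rfl fun i _ => by ring
    have e2 : ∑ p : PairLE n, g (.inr (.inr (.inl p))) * (t * x p.1.1 * (t * x p.1.2)) =
        (∑ p : PairLE n, g (.inr (.inr (.inl p))) * (x p.1.1 * x p.1.2)) * t ^ 2 := by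
      rw [Finset.sum_mul]; exact Finset.sum_congr rfl fun p _ => by ring
    have e3 : ∑ i, g (.inr (.inr (.inr (.inl i)))) * (sfun A (fun k => t * x k) * (t * x i)) =
        (sfun A x * ∑ i, g (.inr (.inr (.inr (.inl i)))) * x i) * t ^ 3 := by
      rw [Finset.mul_sum, Finset.sum_mul]
      refine Finset.sum_congr rfl fun i _ => ?_
      rw [sfun_smul]; ring
    have e4 : g (.inr (.inr (.inr (.inr ())))) * sfun A (fun k => t * x k) ^ 2 =
        (g (.inr (.inr (.inr (.inr ())))) * sfun A x ^ 2) * t ^ 4 := by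
      rw [sfun_smul]; ring
    rw [e1, e2, e3, e4] at h
    linarith [h]
  have hquad_diag : ∀ i : Fin n, g (.inr (.inr (.inl ⟨(i, i), le_refl i⟩))) = 0 := by
    intro i
    have h := (hsep (fun k => if k = i then 1 else 0)).2.2.1
    rw [Finset.sum_eq_single (⟨(i, i), le_refl i⟩ : PairLE n)] at h
    · simpa using h
    · rintro ⟨⟨a, b⟩, hab⟩ - hne
      by_cases ha : a = i
      · by_cases hb : b = i
        · subst ha; subst hb; exact absurd rfl hne
        · simp [hb]
      · simp [ha]
    · intro h'; exact absurd (Finset.mem_univ _) h'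
  have hquad : ∀ p : PairLE n, g (.inr (.inr (.inl p))) = 0 := by
    rintro ⟨⟨a, b⟩, hab⟩
    rcases eq_or_lt_of_le hab with heq | hlt
    · cases heq
      exact hquad_diag a
    · have hab' : a ≠ b := hlt.ne
      set v : Fin n → ℝ := fun k => (if k = a then (1:ℝ) else 0) + (if k = b then 1 else 0)
        with hv
      have h := (hsep v).2.2.1
      set T : Finset (PairLE n) :=
        {⟨(a, a), le_refl a⟩, ⟨(a, b), hab⟩, ⟨(b, b), le_refl b⟩} with hT
      rw [← Finset.sum_subset (Finset.subset_univ T)] at h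
      swap
      · rintro ⟨⟨u, w⟩, huw⟩ - hnotmem
        by_cases hu1 : u = a
        · by_cases hw1 : w = a
          · exfalso; apply hnotmem; subst hu1; subst hw1; simp [hT]
          · by_cases hw2 : w = b
            · exfalso; apply hnotmem; subst hu1; subst hw2; simp [hT]
            · have : v w = 0 := by simp [hv, hw1, hw2]
              simp [this]
        · by_cases hu2 : u = b
          · by_cases hw1 : w = a
            · exfalso; subst hu2; subst hw1
              exact absurd huw (not_le.mpr hlt)
            · by_cases hw2 : w = b
              · exfalso; apply hnotmem; subst hu2; subst hw2; simp [hT]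
              · have : v w = 0 := by simp [hv, hw1, hw2]
                simp [this]
          · have : v u = 0 := by simp [hv, hu1, hu2]
            simp [this]
      have hne1 : (⟨(a, a), le_refl a⟩ : PairLE n) ∉
          ({⟨(a, b), hab⟩, ⟨(b, b), le_refl b⟩} : Finset (PairLE n)) := by
        simp [Subtype.ext_iff, Prod.ext_iff, hab', hab'.symm]
      have hne2 : (⟨(a, b), hab⟩ : PairLE n) ∉
          ({⟨(b, b), le_refl b⟩} : Finset (PairLE n)) := by
        simp [Subtype.ext_iff, Prod.ext_iff, hab']
      rw [hT, Finset.sum_insert hne1, Finset.sum_insert hne2, Finset.sum_singleton] at h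
      have hva : v a = 1 := by simp [hv, hab']
      have hvb : v b = 1 := by simp [hv, hab'.symm]
      rw [hva, hvb, hquad_diag a, hquad_diag b] at h
      simpa using h
  have hlin : ∀ i : Fin n, g (.inr (.inl i)) = 0 := by
    intro i
    have h := (hsep (fun k => if k = i then 1 else 0)).2.1
    rw [sum_single i] at h
    exact h
  have hcub : ∀ i : Fin n, g (.inr (.inr (.inr (.inl i)))) = 0 := by
    have hLP : (∑ i, MvPolynomial.C (g (.inr (.inr (.inr (.inl i))))) * MvPolynomial.X i :
        MvPolynomial (Fin n) ℝ) = 0 := by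
      have hprod : spoly A *
          (∑ i, MvPolynomial.C (g (.inr (.inr (.inr (.inl i))))) * MvPolynomial.X i) = 0 := by
        apply MvPolynomial.funext
        intro x
        simp only [map_mul, map_sum, MvPolynomial.eval_C, MvPolynomial.eval_X, map_zero,
          eval_spoly]
        exact (hsep x).2.2.2.1
      rcases mul_eq_zero.mp hprod with h | h
      · exfalso; apply hx₀; rw [← eval_spoly A x₀, h, map_zero]
      · exact h
    intro i
    have h2 := congrArg (MvPolynomial.eval (fun k => if k = i then (1:ℝ) else 0)) hLP
    simp only [map_sum, map_mul, MvPolynomial.eval_C, MvPolynomial.eval_X, map_zero] at h2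
    rw [sum_single i] at h2
    exact h2
  have hquart : g (.inr (.inr (.inr (.inr ())))) = 0 := by
    have h := (hsep x₀).2.2.2.2
    exact (mul_eq_zero.mp h).resolve_right (pow_ne_zero 2 hx₀)
  rintro (⟨⟩ | i | p | i | ⟨⟩)
  · exact (hsep x₀).1
  · exact hlin i
  · exact hquad p
  · exact hcub i
  · exact hquart

lemma quad_mem {n : ℕ} (A : Matrix (Fin n) (Fin n) ℝ) (M : Matrix (Fin n) (Fin n) ℝ) :
    (fun x : Fin n → ℝ => ∑ i, ∑ j, M i j * x i * x j) ∈
      Submodule.span ℝ (Set.range (bfun A)) := by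
  have hmono : ∀ i j : Fin n, (fun x : Fin n → ℝ => x i * x j) ∈
      Submodule.span ℝ (Set.range (bfun A)) := by
    intro i j
    rcases le_total i j with h | h
    · exact Submodule.subset_span ⟨.inr (.inr (.inl ⟨(i, j), h⟩)), rfl⟩
    · have heq : (fun x : Fin n → ℝ => x i * x j) = (fun x => x j * x i) :=
        funext fun x => mul_comm _ _
      rw [heq]
      exact Submodule.subset_span ⟨.inr (.inr (.inl ⟨(j, i), h⟩)), rfl⟩
  have heq : (fun x : Fin n → ℝ => ∑ i, ∑ j, M i j * x i * x j) =
      ∑ i, ∑ j, M i j • (fun x : Fin n → ℝ => x i * x j) := by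
    funext x
    simp [Finset.sum_apply, mul_assoc]
  rw [heq]
  exact Submodule.sum_mem _ fun i _ => Submodule.sum_mem _ fun j _ =>
    Submodule.smul_mem _ _ (hmono i j)

lemma deg2_mem {n : ℕ} (A B : Matrix (Fin n) (Fin n) ℝ) (b₁ b₂ : Fin n → ℝ) (c₁ c₂ c₃ : ℝ) :
    (fun x => deg2Poly B b₁ b₂ c₁ c₂ c₃ x (sfun A x)) ∈
      Submodule.span ℝ (Set.range (bfun A)) := by
  have h1 : (fun x : Fin n → ℝ => ∑ i, ∑ j, B i j * x i * x j) ∈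
      Submodule.span ℝ (Set.range (bfun A)) := quad_mem A B
  have h2 : (fun x : Fin n → ℝ => ∑ i, b₁ i * x i) ∈
      Submodule.span ℝ (Set.range (bfun A)) := by
    have heq : (fun x : Fin n → ℝ => ∑ i, b₁ i * x i) =
        ∑ i, b₁ i • (fun x : Fin n → ℝ => x i) := by
      funext x; simp [Finset.sum_apply]
    rw [heq]
    exact Submodule.sum_mem _ fun i _ => Submodule.smul_mem _ _
      (Submodule.subset_span ⟨.inr (.inl i), rfl⟩)
  have h3 : (fun _ : Fin n → ℝ => c₁) ∈ Submodule.span ℝ (Set.range (bfun A)) := by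
    have heq : (fun _ : Fin n → ℝ => c₁) = c₁ • (bfun A (.inl ())) := by
      funext x; simp [bfun]
    rw [heq]
    exact Submodule.smul_mem _ _ (Submodule.subset_span ⟨.inl (), rfl⟩)
  have h4 : (fun x : Fin n → ℝ => sfun A x * ∑ i, b₂ i * x i) ∈
      Submodule.span ℝ (Set.range (bfun A)) := by
    have heq : (fun x : Fin n → ℝ => sfun A x * ∑ i, b₂ i * x i) =
        ∑ i, b₂ i • (fun x : Fin n → ℝ => sfun A x * x i) := by
      funext x
      simp only [Finset.sum_apply, Pi.smul_apply, smul_eq_mul, Finset.mul_sum]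
      exact Finset.sum_congr rfl fun i _ => by ring
    rw [heq]
    exact Submodule.sum_mem _ fun i _ => Submodule.smul_mem _ _
      (Submodule.subset_span ⟨.inr (.inr (.inr (.inl i))), rfl⟩)
  have h5 : (fun x : Fin n → ℝ => c₂ * sfun A x ^ 2) ∈
      Submodule.span ℝ (Set.range (bfun A)) := by
    have heq : (fun x : Fin n → ℝ => c₂ * sfun A x ^ 2) =
        c₂ • (bfun A (.inr (.inr (.inr (.inr ()))))) := by
      funext x; simp [bfun]
    rw [heq]
    exact Submodule.smul_mem _ _ (Submodule.subset_span ⟨_, rfl⟩)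
  have h6 : (fun x : Fin n → ℝ => c₃ * sfun A x) ∈
      Submodule.span ℝ (Set.range (bfun A)) := by
    have heq : (fun x : Fin n → ℝ => c₃ * sfun A x) =
        fun x : Fin n → ℝ => ∑ i, ∑ j, (c₃ • A) i j * x i * x j := by
      funext x
      simp only [sfun, Finset.mul_sum, Matrix.smul_apply, smul_eq_mul]
      exact Finset.sum_congr rfl fun i _ => Finset.sum_congr rfl fun j _ => by ring
    rw [heq]
    exact quad_mem A _
  have heq : (fun x => deg2Poly B b₁ b₂ c₁ c₂ c₃ x (sfun A x)) =
      (fun x : Fin n → ℝ => ∑ i, ∑ j, B i j * x i * x j) + (fun x => ∑ i, b₁ i * x i) +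
        (fun _ => c₁) + (fun x => sfun A x * ∑ i, b₂ i * x i) +
        (fun x => c₂ * sfun A x ^ 2) + (fun x => c₃ * sfun A x) := by
    funext x
    simp [deg2Poly]
  rw [heq]
  exact add_mem (add_mem (add_mem (add_mem (add_mem h1 h2) h3) h4) h5) h6

lemma deg2_scale {n : ℕ} (A B : Matrix (Fin n) (Fin n) ℝ) (b₁ b₂ : Fin n → ℝ)
    (c₁ c₂ c₃ : ℝ) (x : Fin n → ℝ) (t : ℝ) :
    deg2Poly B b₁ b₂ c₁ c₂ c₃ (fun k => t * x k) (sfun A (fun k => t * x k)) =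
      c₁ + (∑ i, b₁ i * x i) * t +
        ((∑ i, ∑ j, B i j * x i * x j) + c₃ * sfun A x) * t ^ 2 +
        (sfun A x * ∑ i, b₂ i * x i) * t ^ 3 + (c₂ * sfun A x ^ 2) * t ^ 4 := by
  have e0 : ∑ i, ∑ j, B i j * (t * x i) * (t * x j) =
      (∑ i, ∑ j, B i j * x i * x j) * t ^ 2 := by
    rw [Finset.sum_mul]
    refine Finset.sum_congr rfl fun i _ => ?_
    rw [Finset.sum_mul]
    exact Finset.sum_congr rfl fun j _ => by ring
  have e1 : ∑ i, b₁ i * (t * x i) = (∑ i, b₁ i * x i) * t := by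
    rw [Finset.sum_mul]; exact Finset.sum_congr rfl fun i _ => by ring
  have e2 : ∑ i, b₂ i * (t * x i) = (∑ i, b₂ i * x i) * t := by
    rw [Finset.sum_mul]; exact Finset.sum_congr rfl fun i _ => by ring
  simp only [deg2Poly, sfun_smul]
  rw [e0, e1, e2]
  ring

lemma gram_mulVec {n m : ℕ} (A : Matrix (Fin n) (Fin n) ℝ) (X : Fin m → Fin n → ℝ)
    (c : BIdx n → ℝ) (i : BIdx n) :
    (Matrix.of fun i j : BIdx n =>
        ∑ ℓ, bfun A i (X ℓ) * bfun A j (X ℓ)).mulVec c i =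
      ∑ ℓ, bfun A i (X ℓ) * (∑ j, c j * bfun A j (X ℓ)) := by
  calc (Matrix.of fun i j : BIdx n =>
        ∑ ℓ, bfun A i (X ℓ) * bfun A j (X ℓ)).mulVec c i
      = ∑ j, (∑ ℓ, bfun A i (X ℓ) * bfun A j (X ℓ)) * c j := by
        simp [Matrix.mulVec, dotProduct]
    _ = ∑ j, ∑ ℓ, bfun A i (X ℓ) * bfun A j (X ℓ) * c j := by
        exact Finset.sum_congr rfl fun j _ => Finset.sum_mul _ _ _
    _ = ∑ ℓ, ∑ j, bfun A i (X ℓ) * bfun A j (X ℓ) * c j := Finset.sum_comm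
    _ = ∑ ℓ, bfun A i (X ℓ) * (∑ j, c j * bfun A j (X ℓ)) := by
        refine Finset.sum_congr rfl fun ℓ _ => ?_
        rw [Finset.mul_sum]
        exact Finset.sum_congr rfl fun j _ => by ring

lemma gram_inj {n m : ℕ} (A : Matrix (Fin n) (Fin n) ℝ) (X : Fin m → Fin n → ℝ)
    (hdet : (Matrix.of fun i j : BIdx n =>
      ∑ ℓ, bfun A i (X ℓ) * bfun A j (X ℓ)).det ≠ 0)
    (c : BIdx n → ℝ) (hc : ∀ ℓ, ∑ j, c j * bfun A j (X ℓ) = 0) : ∀ i, c i = 0 := by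
  by_contra hcon
  push_neg at hcon
  obtain ⟨i0, hi0⟩ := hcon
  apply hdet
  apply Matrix.exists_mulVec_eq_zero_iff.mp
  refine ⟨c, fun h => hi0 (congrFun h i0), ?_⟩
  funext i
  rw [gram_mulVec]
  simp only [Pi.zero_apply]
  apply Finset.sum_eq_zero
  intro ℓ _
  rw [hc ℓ, mul_zero]

/-- Let `A*` be a nonzero symmetric matrix with zero diagonal and let
`x⁽¹⁾, …, x⁽ᵐ⁾` be independent `N(0,ρ²)ⁿ` vectors with `m > (n+1)²`, and set
`z⁽ˡ⁾ = (x⁽ˡ⁾)ᵀA*x⁽ˡ⁾`. Then almost surely every polynomial `q` of total degree at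
most 2 in `(x, z)` that vanishes at all the points `(x⁽ˡ⁾, z⁽ˡ⁾)` is of the form
`q(x,z) = C·(z − xᵀA*x)` for some constant `C`. -/
theorem stmt_13 {n : ℕ} (hn : 1 ≤ n) (Astar : Matrix (Fin n) (Fin n) ℝ)
    (hsymm : Astar.IsSymm) (hdiag : ∀ i, Astar i i = 0) (hne : Astar ≠ 0)
    (ρ : ℝ) (hρ : 0 < ρ) (m : ℕ) (hm : (n + 1) ^ 2 < m) :
    ∀ᵐ X : Fin m → Fin n → ℝ
      ∂(Measure.pi fun _ : Fin m =>
          Measure.pi fun _ : Fin n => gaussianReal 0 (Real.toNNReal (ρ ^ 2))),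
      ∀ (B : Matrix (Fin n) (Fin n) ℝ) (b₁ b₂ : Fin n → ℝ) (c₁ c₂ c₃ : ℝ),
        (∀ ℓ : Fin m,
          deg2Poly B b₁ b₂ c₁ c₂ c₃ (X ℓ)
            (∑ i, ∑ j, Astar i j * X ℓ i * X ℓ j) = 0) →
        ∃ C : ℝ, ∀ (x : Fin n → ℝ) (z : ℝ),
          deg2Poly B b₁ b₂ c₁ c₂ c₃ x z =
            C * (z - ∑ i, ∑ j, Astar i j * x i * x j) := by

  classical
  have hvar : Real.toNNReal (ρ ^ 2) ≠ 0 := by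
    rw [ne_eq, Real.toNNReal_eq_zero, not_le]
    positivity
  have hac : gaussianReal 0 (Real.toNNReal (ρ ^ 2)) ≪ volume :=
    gaussianReal_absolutelyContinuous _ hvar
  -- a nonzero off-diagonal entry of Astar
  have hex : ∃ i j, Astar i j ≠ 0 := by
    by_contra hcon
    push_neg at hcon
    exact hne (by ext i j; simpa using hcon i j)
  obtain ⟨i0, j0, hA0⟩ := hex
  have hij : i0 ≠ j0 := fun h => hA0 (by subst h; exact hdiag i0)
  set x₀ : Fin n → ℝ := fun k => (if k = i0 then (1:ℝ) else 0) + (if k = j0 then 1 else 0)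
    with hx₀def
  have hx₀ : sfun Astar x₀ ≠ 0 := by
    rw [hx₀def, sfun_pair, hdiag i0, hdiag j0]
    have hsy : Astar j0 i0 = Astar i0 j0 := hsymm.apply i0 j0
    intro hcon
    apply hA0
    rw [hsy] at hcon
    linarith
  have hInd : LinearIndependent ℝ (bfun Astar) := bfun_indep Astar x₀ hx₀
  -- an embedding of the index type into Fin m
  have hcard : Fintype.card (BIdx n) ≤ m := by
    have h1 : Fintype.card (PairLE n) ≤ n * n := by
      simpa using Fintype.card_subtype_le (fun p : Fin n × Fin n => p.1 ≤ p.2)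
    have h2 : Fintype.card (BIdx n) = 1 + (n + (Fintype.card (PairLE n) + (n + 1))) := by
      simp [Fintype.card_sum]
    have h4 : (n + 1) ^ 2 = n * n + 2 * n + 1 := by ring
    omega
  obtain ⟨e⟩ : Nonempty (BIdx n ↪ Fin m) :=
    Function.Embedding.nonempty_of_card_le (by simpa using hcard)
  set r := Fintype.card (BIdx n) with hr
  set eqv : Fin r ≃ BIdx n := (Fintype.equivFin (BIdx n)).symm with heqv
  obtain ⟨y, hy⟩ :=
    exists_eval_matrix_det_ne_zero r (bfun Astar ∘ eqv) (hInd.comp eqv eqv.injective)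
  set X₀ : Fin m → Fin n → ℝ := Function.extend (⇑e ∘ ⇑eqv) y (fun _ _ => 0) with hX₀def
  have hX₀ : ∀ k, X₀ (e (eqv k)) = y k := by
    intro k
    rw [hX₀def]
    exact Function.Injective.extend_apply (e.injective.comp eqv.injective) _ _ _
  -- the Gram determinant is nonzero at X₀
  have hdet₀ : (Matrix.of fun i j : BIdx n =>
      ∑ ℓ, bfun Astar i (X₀ ℓ) * bfun Astar j (X₀ ℓ)).det ≠ 0 := by
    intro h0
    obtain ⟨c, hc0, hGc⟩ := Matrix.exists_mulVec_eq_zero_iff.mpr h0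
    have hsq : ∑ ℓ, (∑ j, c j * bfun Astar j (X₀ ℓ)) ^ 2 = 0 := by
      have h1 : ∑ i, c i * (Matrix.of fun i j : BIdx n =>
          ∑ ℓ, bfun Astar i (X₀ ℓ) * bfun Astar j (X₀ ℓ)).mulVec c i = 0 := by
        rw [hGc]; simp
      calc ∑ ℓ, (∑ j, c j * bfun Astar j (X₀ ℓ)) ^ 2
          = ∑ ℓ, (∑ i, c i * bfun Astar i (X₀ ℓ)) * (∑ j, c j * bfun Astar j (X₀ ℓ)) :=
            Finset.sum_congr rfl fun ℓ _ => sq _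
        _ = ∑ ℓ, ∑ i, c i * bfun Astar i (X₀ ℓ) * (∑ j, c j * bfun Astar j (X₀ ℓ)) :=
            Finset.sum_congr rfl fun ℓ _ => Finset.sum_mul _ _ _
        _ = ∑ i, ∑ ℓ, c i * bfun Astar i (X₀ ℓ) * (∑ j, c j * bfun Astar j (X₀ ℓ)) :=
            Finset.sum_comm
        _ = ∑ i, c i * (Matrix.of fun i j : BIdx n =>
              ∑ ℓ, bfun Astar i (X₀ ℓ) * bfun Astar j (X₀ ℓ)).mulVec c i := by
            refine Finset.sum_congr rfl fun i _ => ?_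
            rw [gram_mulVec, Finset.mul_sum]
            exact Finset.sum_congr rfl fun ℓ _ => by ring
        _ = 0 := h1
    have hev : ∀ ℓ, ∑ j, c j * bfun Astar j (X₀ ℓ) = 0 := by
      intro ℓ
      have h2 := (Finset.sum_eq_zero_iff_of_nonneg
        (fun ℓ _ => sq_nonneg _)).mp hsq ℓ (Finset.mem_univ _)
      exact pow_eq_zero_iff two_ne_zero |>.mp h2
    have hN : ∀ k, ((Matrix.of fun i j =>
        (bfun Astar ∘ eqv) i (y j)).transpose).mulVec (fun k' => c (eqv k')) k = 0 := by
      intro k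
      have h1 := hev (e (eqv k))
      rw [hX₀ k] at h1
      have h2 : ∑ j : BIdx n, c j * bfun Astar j (y k) =
          ∑ k' : Fin r, c (eqv k') * bfun Astar (eqv k') (y k) :=
        (Equiv.sum_comp eqv fun j => c j * bfun Astar j (y k)).symm
      simp only [Matrix.mulVec, dotProduct, Matrix.transpose_apply, Matrix.of_apply,
        Function.comp_apply]
      calc ∑ k' : Fin r, bfun Astar (eqv k') (y k) * c (eqv k')
          = ∑ k' : Fin r, c (eqv k') * bfun Astar (eqv k') (y k) :=
            Finset.sum_congr rfl fun k' _ => mul_comm _ _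
        _ = ∑ j : BIdx n, c j * bfun Astar j (y k) := h2.symm
        _ = 0 := h1
    by_cases hcc : (fun k' => c (eqv k')) = (0 : Fin r → ℝ)
    · apply hc0
      funext i
      have h3 := congrFun hcc (eqv.symm i)
      simpa using h3
    · have h4 : ((Matrix.of fun i j => (bfun Astar ∘ eqv) i (y j)).transpose).det = 0 :=
        Matrix.exists_mulVec_eq_zero_iff.mp ⟨(fun k' => c (eqv k')), hcc, funext hN⟩
      rw [Matrix.det_transpose] at h4
      exact hy h4
  -- the Gram determinant as a polynomial in the samples
  set QG : MvPolynomial (Fin m × Fin n) ℝ := (Matrix.of fun i j : BIdx n =>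
      ∑ ℓ : Fin m, MvPolynomial.rename (Prod.mk ℓ) (bpoly Astar i) *
        MvPolynomial.rename (Prod.mk ℓ) (bpoly Astar j)).det with hQGdef
  have hevalQG : ∀ X : Fin m → Fin n → ℝ,
      MvPolynomial.eval (fun p : Fin m × Fin n => X p.1 p.2) QG =
        (Matrix.of fun i j : BIdx n =>
          ∑ ℓ, bfun Astar i (X ℓ) * bfun Astar j (X ℓ)).det := by
    intro X
    rw [hQGdef, RingHom.map_det]
    congr 1
    ext i j
    simp only [RingHom.mapMatrix_apply, Matrix.map_apply, Matrix.of_apply, map_sum, map_mul]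
    refine Finset.sum_congr rfl fun ℓ _ => ?_
    rw [MvPolynomial.eval_rename_prod_mk, MvPolynomial.eval_rename_prod_mk]
    rw [show (fun q => X (ℓ, q).1 (ℓ, q).2) = X ℓ from rfl]
    rw [eval_bpoly, eval_bpoly]
  have hQGne : QG ≠ 0 := by
    intro h
    apply hdet₀
    rw [← hevalQG X₀, h, map_zero]
  have key := ae_eval_ne_zero_curry (gaussianReal 0 (Real.toNNReal (ρ ^ 2))) hac QG hQGne
  filter_upwards [key] with X hX
  intro B b₁ b₂ c₁ c₂ c₃ hvan
  rw [hevalQG X] at hX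
  -- representation in the spanning family
  obtain ⟨c, hc⟩ := (Submodule.mem_span_range_iff_exists_fun ℝ).mp (deg2_mem Astar B b₁ b₂ c₁ c₂ c₃)
  have hcv : ∀ ℓ, ∑ i, c i * bfun Astar i (X ℓ) = 0 := by
    intro ℓ
    have h1 := congrFun hc (X ℓ)
    simp only [Finset.sum_apply, Pi.smul_apply, smul_eq_mul] at h1
    rw [h1]
    exact hvan ℓ
  have hczero : ∀ i, c i = 0 := gram_inj Astar X hX c hcv
  have hFzero : ∀ x, deg2Poly B b₁ b₂ c₁ c₂ c₃ x (sfun Astar x) = 0 := by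
    intro x
    have h1 := congrFun hc x
    simp only [Finset.sum_apply, Pi.smul_apply, smul_eq_mul] at h1
    rw [← h1]
    exact Finset.sum_eq_zero fun i _ => by rw [hczero i, zero_mul]
  have hco : ∀ x : Fin n → ℝ,
      c₁ = 0 ∧ (∑ i, b₁ i * x i) = 0 ∧
      ((∑ i, ∑ j, B i j * x i * x j) + c₃ * sfun Astar x) = 0 ∧
      (sfun Astar x * ∑ i, b₂ i * x i) = 0 ∧ (c₂ * sfun Astar x ^ 2) = 0 := by
    intro x
    apply quartic_coeffs
    intro t
    rw [← deg2_scale Astar B b₁ b₂ c₁ c₂ c₃ x t]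
    exact hFzero _
  have hc₁ : c₁ = 0 := (hco x₀).1
  have hA1 : ∀ x : Fin n → ℝ, ∑ i, b₁ i * x i = 0 := fun x => (hco x).2.1
  have hA2 : ∀ x : Fin n → ℝ, (∑ i, ∑ j, B i j * x i * x j) + c₃ * sfun Astar x = 0 :=
    fun x => (hco x).2.2.1
  have hA3 : ∀ x : Fin n → ℝ, sfun Astar x * ∑ i, b₂ i * x i = 0 := fun x => (hco x).2.2.2.1
  have hc₂ : c₂ = 0 :=
    (mul_eq_zero.mp (hco x₀).2.2.2.2).resolve_right (pow_ne_zero 2 hx₀)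
  have hb₂ : ∀ x : Fin n → ℝ, ∑ i, b₂ i * x i = 0 := by
    have hprod : spoly Astar * (∑ i, MvPolynomial.C (b₂ i) * MvPolynomial.X i) = 0 := by
      apply MvPolynomial.funext
      intro x
      simp only [map_mul, map_sum, MvPolynomial.eval_C, MvPolynomial.eval_X, map_zero,
        eval_spoly]
      exact hA3 x
    have hLP : (∑ i, MvPolynomial.C (b₂ i) * MvPolynomial.X i : MvPolynomial (Fin n) ℝ) = 0 := by
      rcases mul_eq_zero.mp hprod with h | h
      · exfalso; apply hx₀; rw [← eval_spoly Astar x₀, h, map_zero]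
      · exact h
    intro x
    have h2 := congrArg (MvPolynomial.eval x) hLP
    simpa using h2
  refine ⟨c₃, fun x z => ?_⟩
  have h2 := hA2 x
  have h1 := hA1 x
  have hb := hb₂ x
  simp only [deg2Poly]
  simp only [sfun] at h2
  linear_combination h2 + h1 + hc₁ + z * hb + z ^ 2 * hc₂
end

section
/- Let n ≥ 1 and let A* ∈ ℝ^{n×n} be a nonzero symmetric matrix with zero diagonal. If q : ℝⁿ × ℝ → ℝ is a polynomial of total degree at most 2 in the n+1 variables (x₁,…,x_n,z) such that q(x, xᵀA*x) = 0 for every x ∈ ℝⁿ, then there exists a constant C ∈ ℝ such that q(x, z) = C·(z − xᵀA*x) for all (x, z) ∈ ℝⁿ × ℝ. -/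
private lemma sum_scale {n : ℕ} (M : Matrix (Fin n) (Fin n) ℝ) (v : Fin n → ℝ) (t : ℝ) :
    (∑ i, ∑ j, M i j * (t * v i) * (t * v j)) = t ^ 2 * ∑ i, ∑ j, M i j * v i * v j := by
  rw [Finset.mul_sum]
  refine Finset.sum_congr rfl fun i _ => ?_
  rw [Finset.mul_sum]
  refine Finset.sum_congr rfl fun j _ => ?_
  ring

private lemma lin_scale {n : ℕ} (b v : Fin n → ℝ) (t : ℝ) :
    (∑ i, b i * (t * v i)) = t * ∑ i, b i * v i := by
  rw [Finset.mul_sum]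
  refine Finset.sum_congr rfl fun i _ => ?_
  ring

private lemma sum_expand {n : ℕ} (M : Matrix (Fin n) (Fin n) ℝ) (u v : Fin n → ℝ) (t : ℝ) :
    (∑ i, ∑ j, M i j * (u i + t * v i) * (u j + t * v j)) =
      (∑ i, ∑ j, M i j * u i * u j)
        + t * (∑ i, ∑ j, M i j * (u i * v j + v i * u j))
        + t ^ 2 * (∑ i, ∑ j, M i j * v i * v j) := by
  simp only [Finset.mul_sum, ← Finset.sum_add_distrib]
  refine Finset.sum_congr rfl fun i _ => ?_
  refine Finset.sum_congr rfl fun j _ => ?_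
  ring

private lemma lin_expand {n : ℕ} (b u v : Fin n → ℝ) (t : ℝ) :
    (∑ i, b i * (u i + t * v i)) = (∑ i, b i * u i) + t * ∑ i, b i * v i := by
  simp only [Finset.mul_sum, ← Finset.sum_add_distrib]
  refine Finset.sum_congr rfl fun i _ => ?_
  ring

/-- Let `A*` be a nonzero symmetric matrix with zero diagonal. If
`q : ℝⁿ × ℝ → ℝ` is a polynomial of total degree at most 2 in `(x, z)` (i.e. it has
the general form `xᵀBx + b₁·x + c₁ + z·(b₂·x) + c₂z² + c₃z`) and
`q(x, xᵀA*x) = 0` for every `x ∈ ℝⁿ`, then there is a constant `C` with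
`q(x,z) = C·(z − xᵀA*x)` for all `(x, z)`. -/
theorem stmt_14 {n : ℕ} (hn : 1 ≤ n) (Astar : Matrix (Fin n) (Fin n) ℝ)
    (hsymm : Astar.IsSymm) (hdiag : ∀ i, Astar i i = 0) (hne : Astar ≠ 0)
    (q : (Fin n → ℝ) → ℝ → ℝ)
    (hq : ∃ (B : Matrix (Fin n) (Fin n) ℝ) (b₁ b₂ : Fin n → ℝ) (c₁ c₂ c₃ : ℝ),
      ∀ (x : Fin n → ℝ) (z : ℝ), q x z = deg2Poly B b₁ b₂ c₁ c₂ c₃ x z)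
    (hvanish : ∀ x : Fin n → ℝ, q x (∑ i, ∑ j, Astar i j * x i * x j) = 0) :
    ∃ C : ℝ, ∀ (x : Fin n → ℝ) (z : ℝ),
      q x z = C * (z - ∑ i, ∑ j, Astar i j * x i * x j) := by
  obtain ⟨B, b₁, b₂, c₁, c₂, c₃, hqdef⟩ := hq
  set S : (Fin n → ℝ) → ℝ := fun x => ∑ i, ∑ j, Astar i j * x i * x j with hS
  -- coefficient extraction
  have key : ∀ x : Fin n → ℝ,
      c₁ = 0 ∧ (∑ i, b₁ i * x i) = 0 ∧
      ((∑ i, ∑ j, B i j * x i * x j) + c₃ * S x = 0) ∧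
      (S x * (∑ i, b₂ i * x i) = 0) ∧ (c₂ * (S x) ^ 2 = 0) := by
    intro x
    have E : ∀ t : ℝ,
        c₁ + t * (∑ i, b₁ i * x i)
          + t ^ 2 * ((∑ i, ∑ j, B i j * x i * x j) + c₃ * S x)
          + t ^ 3 * (S x * (∑ i, b₂ i * x i))
          + t ^ 4 * (c₂ * (S x) ^ 2) = 0 := by
      intro t
      have h := hvanish (fun i => t * x i)
      rw [hqdef] at h
      simp only [deg2Poly] at h
      rw [sum_scale Astar x t, sum_scale B x t, lin_scale b₁ x t, lin_scale b₂ x t] at h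
      linear_combination h
    have h0 := E 0
    have h1 := E 1
    have h2 := E (-1)
    have h3 := E 2
    have h4 := E (-2)
    norm_num at h0 h1 h2 h3 h4
    refine ⟨h0, by linarith, by linarith, by linarith, by linarith⟩
  -- a point where the quadratic form is nonzero
  obtain ⟨i, j, hij⟩ : ∃ i j, Astar i j ≠ 0 := by
    by_contra h
    push_neg at h
    exact hne (by ext i j; simp [h])
  have hij' : i ≠ j := fun h => hij (h ▸ hdiag i)
  set x₀ : Fin n → ℝ := fun k => (if k = i then (1:ℝ) else 0) + (if k = j then 1 else 0) with hx₀
  have hSx₀ : S x₀ = 2 * Astar i j := by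
    have hji : Astar j i = Astar i j := by
      have := hsymm
      rw [Matrix.IsSymm] at this
      calc Astar j i = Astar.transpose i j := rfl
        _ = Astar i j := by rw [this]
    simp only [hS, hx₀]
    simp only [mul_add, add_mul, mul_ite, mul_one, mul_zero, ite_mul, zero_mul, one_mul,
      Finset.sum_add_distrib, Finset.sum_ite_eq', Finset.sum_ite_eq, Finset.mem_univ, if_true]
    simp [hij', Ne.symm hij', hdiag, hji]
    ring
  have hS0 : S x₀ ≠ 0 := by
    rw [hSx₀]; exact mul_ne_zero two_ne_zero hij
  have hc₂ : c₂ = 0 := by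
    have h := (key x₀).2.2.2.2
    exact (mul_eq_zero.1 h).resolve_right (pow_ne_zero _ hS0)
  have hb₂x₀ : (∑ i, b₂ i * x₀ i) = 0 :=
    (mul_eq_zero.1 (key x₀).2.2.2.1).resolve_left hS0
  have hb₂ : ∀ x : Fin n → ℝ, (∑ i, b₂ i * x i) = 0 := by
    intro x
    by_contra hbx
    have G : ∀ t : ℝ,
        (S x₀ + t * (∑ i, ∑ j, Astar i j * (x₀ i * x j + x i * x₀ j)) + t ^ 2 * S x)
          * (t * (∑ i, b₂ i * x i)) = 0 := by
      intro t
      have h := (key (fun k => x₀ k + t * x k)).2.2.2.1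
      simp only [hS] at h ⊢
      rw [sum_expand Astar x₀ x t, lin_expand b₂ x₀ x t, hb₂x₀] at h
      linear_combination h
    have f : ∀ t : ℝ, t ≠ 0 →
        S x₀ + t * (∑ i, ∑ j, Astar i j * (x₀ i * x j + x i * x₀ j)) + t ^ 2 * S x = 0 :=
      fun t ht => (mul_eq_zero.1 (G t)).resolve_right (mul_ne_zero ht hbx)
    have e1 := f 1 one_ne_zero
    have e2 := f (-1) (by norm_num)
    have e3 := f 2 two_ne_zero
    norm_num at e1 e2 e3
    exact hS0 (by linarith)
  refine ⟨c₃, fun x z => ?_⟩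
  rw [hqdef]
  simp only [deg2Poly]
  obtain ⟨h0, h1, h2q, -, -⟩ := key x
  linear_combination h2q + h1 + h0 + z * hb₂ x + z ^ 2 * hc₂
end

section
/- There is a universal constant K > 0 such that the following holds. Let n ≥ 2, let A = (a_{i,j}) ∈ ℝ^{n×n} be symmetric with zero diagonal, and let 0 < ε < 1/10 and 0 < δ < 1/10. Write ã_{i,j} = ε + |a_{i,j}| and M = max(1, 1/(ε + min_{i≠j} |a_{i,j}|)), and suppose τ' ≥ K·(n²/ε)·M, τ ≥ K·(n/ε)·M and γ = 4nτ. Let e_i denote the i-th standard basis vector of ℝⁿ, and for i ≠ j and signs σ, σ' ∈ {−1,1} let w^{σ,σ'}_{i,j} = (σ/√(2ã_{i,j}))e_i + (σ'/√(2ã_{i,j}))e_j. Consider the labeled set S ⊂ (ℝⁿ×ℝ) × {−1,+1} consisting of: ((0,1),−1), ((0,−1),+1), ((0,τ'),−1), ((0,−τ'),+1), ((0,2δ),−1), ((0,−2δ),+1); for every i ∈ [n]: ((τe_i, γ),−1), ((τe_i, −γ),+1), ((−τe_i, γ),−1), ((−τe_i, −γ),+1); and for every i ≠ j and all σ, σ'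 ∈ {−1,1}: ((w^{σ,σ'}_{i,j}, 2), −1), ((2·w^{σ,σ'}_{i,j}, 1), σσ'·sgn(a_{i,j})), and ((w^{σ,σ'}_{i,j}, −2), +1). Suppose q' : ℝⁿ × ℝ → ℝ is a polynomial of total degree at most 2 that classifies S with zero error, i.e., for every labeled point (w, y) ∈ S: q'(w) ≥ 0 if y = +1 and q'(w) < 0 if y = −1. Then the coefficient c_z of the monomial z in q' satisfies c_z < 0, and writing q = q'/(−c_z) in the form q(x,z) = xᵀA'x + c₁·x + c₂z² − z + c₄ + z·(β·x) with A' symmetric, one has: |c₂| ≤ ε, |β_i| ≤ ε and |a'_{i,i}| ≤ ε for all i; |c₄| ≤ 4δ; (1/4 − δ − ε/2)·(ε + |a_{i,j}|) ≤ |a'_{i,j}| ≤ (2 + 4δ + 5ε)·(ε + |a_{i,j}|) for all i ≠ j; and |c_{1,i}| ≤ 5·√(2(ε + |a_{i,j}|)) for every i and every j ≠ i. -/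
/-- The general polynomial of total degree at most 2 on `ℝⁿ × ℝ`:
`q'(x,z) = xᵀA''x + c₁''·x + c₂''z² + c_z·z + c₄'' + z·(β''·x)`. -/
noncomputable def q16 {n : ℕ} (A'' : Matrix (Fin n) (Fin n) ℝ) (c₁'' : Fin n → ℝ)
    (c₂'' cz c₄'' : ℝ) (β'' : Fin n → ℝ) (x : Fin n → ℝ) (z : ℝ) : ℝ :=
  (∑ i, ∑ j, A'' i j * x i * x j) + (∑ i, c₁'' i * x i) + c₂'' * z ^ 2 + cz * z +
    c₄'' + z * (∑ i, β'' i * x i)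

lemma q16_zero {n : ℕ} (A'' : Matrix (Fin n) (Fin n) ℝ) (c₁ : Fin n → ℝ)
    (c₂ cz c₄ : ℝ) (β : Fin n → ℝ) (z : ℝ) :
    q16 A'' c₁ c₂ cz c₄ β 0 z = c₂ * z ^ 2 + cz * z + c₄ := by
  simp [q16]

lemma q16_one {n : ℕ} (A'' : Matrix (Fin n) (Fin n) ℝ) (c₁ : Fin n → ℝ)
    (c₂ cz c₄ : ℝ) (β : Fin n → ℝ) (i : Fin n) (t z : ℝ) :
    q16 A'' c₁ c₂ cz c₄ β (t • (Pi.single i 1 : Fin n → ℝ)) z =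
      A'' i i * t ^ 2 + c₁ i * t + c₂ * z ^ 2 + cz * z + c₄ + z * (β i * t) := by
  have hx : ∀ k, (t • (Pi.single i 1 : Fin n → ℝ)) k = if k = i then t else 0 := by
    intro k; simp [Pi.single_apply]
  unfold q16
  simp only [hx]
  simp [Finset.mul_sum, mul_ite, ite_mul, mul_zero, zero_mul, mul_one,
    Finset.sum_ite_eq', Finset.mem_univ]
  ring

lemma q16_two {n : ℕ} (A'' : Matrix (Fin n) (Fin n) ℝ) (c₁ : Fin n → ℝ)
    (c₂ cz c₄ : ℝ) (β : Fin n → ℝ) (i j : Fin n) (a b z : ℝ) :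
    q16 A'' c₁ c₂ cz c₄ β
        (a • (Pi.single i 1 : Fin n → ℝ) + b • (Pi.single j 1 : Fin n → ℝ)) z =
      A'' i i * a ^ 2 + (A'' i j + A'' j i) * (a * b) + A'' j j * b ^ 2 +
        (c₁ i * a + c₁ j * b) + c₂ * z ^ 2 + cz * z + c₄ +
        z * (β i * a + β j * b) := by
  have hx : ∀ k, (a • (Pi.single i 1 : Fin n → ℝ) + b • (Pi.single j 1 : Fin n → ℝ)) k =
      (if k = i then a else 0) + (if k = j then b else 0) := by
    intro k
    by_cases h1 : k = i <;> by_cases h2 : k = j <;> simp [h1, h2, Pi.single_apply]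
  unfold q16
  simp only [hx]
  simp [Finset.mul_sum, mul_add, add_mul, mul_ite, ite_mul, mul_zero, zero_mul,
    mul_one, Finset.sum_add_distrib, Finset.sum_ite_eq', Finset.mem_univ]
  ring

set_option maxHeartbeats 1000000

/-- There is a universal constant `K > 0` such that whenever a degree-2
polynomial `q'` (with symmetric quadratic part `A''`, linear part `c₁''`,
`z²`-coefficient `c₂''`, `z`-coefficient `c_z`, constant `c₄''` and mixed part `β''`)
correctly classifies the labeled set `S` described in the statement (built from a
symmetric zero-diagonal matrix `A`, parameters `ε, δ ∈ (0, 1/10)`, and scales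
`τ' ≥ K(n²/ε)·M`, `τ ≥ K(n/ε)·M`, `γ = 4nτ` where
`M = max(1, 1/(ε + min_{i≠j}|a_{ij}|))`), then `c_z < 0` and the coefficients of the
normalized polynomial `q = q'/(−c_z)` satisfy the stated bounds. Labels `+1`
correspond to `q' ≥ 0` and labels `−1` to `q' < 0`; `sgn(a_{ij})` is `1` if
`a_{ij} ≥ 0` and `−1` otherwise; `Pi.single i 1` is the `i`-th standard basis
vector `e_i`. -/
theorem stmt_16 : ∃ K : ℝ, 0 < K ∧
    ∀ (n : ℕ), 2 ≤ n →
    ∀ A : Matrix (Fin n) (Fin n) ℝ, A.IsSymm → (∀ i, A i i = 0) →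
    ∀ ε δ : ℝ, 0 < ε → ε < 1 / 10 → 0 < δ → δ < 1 / 10 →
    ∀ amin : ℝ, IsLeast {v : ℝ | ∃ i j : Fin n, i ≠ j ∧ v = |A i j|} amin →
    ∀ τ' τ γ : ℝ,
      K * ((n : ℝ) ^ 2 / ε) * max 1 (1 / (ε + amin)) ≤ τ' →
      K * ((n : ℝ) / ε) * max 1 (1 / (ε + amin)) ≤ τ →
      γ = 4 * n * τ →
    ∀ (A'' : Matrix (Fin n) (Fin n) ℝ) (c₁'' : Fin n → ℝ) (c₂'' cz c₄'' : ℝ)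
      (β'' : Fin n → ℝ), A''.IsSymm →
      -- the points of S₁
      q16 A'' c₁'' c₂'' cz c₄'' β'' 0 1 < 0 →
      0 ≤ q16 A'' c₁'' c₂'' cz c₄'' β'' 0 (-1) →
      q16 A'' c₁'' c₂'' cz c₄'' β'' 0 τ' < 0 →
      0 ≤ q16 A'' c₁'' c₂'' cz c₄'' β'' 0 (-τ') →
      q16 A'' c₁'' c₂'' cz c₄'' β'' 0 (2 * δ) < 0 →
      0 ≤ q16 A'' c₁'' c₂'' cz c₄'' β'' 0 (-(2 * δ)) →
      -- the points of S₂: `(±τ eᵢ, ±γ)`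
      (∀ i : Fin n, ∀ σ : ℝ, σ = 1 ∨ σ = -1 →
        q16 A'' c₁'' c₂'' cz c₄'' β'' ((σ * τ) • (Pi.single i 1 : Fin n → ℝ)) γ < 0 ∧
        0 ≤ q16 A'' c₁'' c₂'' cz c₄'' β'' ((σ * τ) • (Pi.single i 1 : Fin n → ℝ)) (-γ)) →
      -- the points of S₃, S₄, S₅: built on `w = (σ/√(2ã_{ij}))eᵢ + (σ'/√(2ã_{ij}))eⱼ`
      (∀ i j : Fin n, i ≠ j → ∀ σ σ' : ℝ, σ = 1 ∨ σ = -1 → σ' = 1 ∨ σ' = -1 →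
        ∀ w : Fin n → ℝ,
          w = (σ / Real.sqrt (2 * (ε + |A i j|))) • (Pi.single i 1 : Fin n → ℝ) +
              (σ' / Real.sqrt (2 * (ε + |A i j|))) • (Pi.single j 1 : Fin n → ℝ) →
          q16 A'' c₁'' c₂'' cz c₄'' β'' w 2 < 0 ∧
          0 ≤ q16 A'' c₁'' c₂'' cz c₄'' β'' w (-2) ∧
          (σ * σ' * (if 0 ≤ A i j then (1 : ℝ) else -1) = 1 →
            0 ≤ q16 A'' c₁'' c₂'' cz c₄'' β'' ((2 : ℝ) • w) 1) ∧
          (σ * σ' * (if 0 ≤ A i j then (1 : ℝ) else -1) = -1 →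
            q16 A'' c₁'' c₂'' cz c₄'' β'' ((2 : ℝ) • w) 1 < 0)) →
      -- conclusions
      cz < 0 ∧
      |c₂'' / (-cz)| ≤ ε ∧
      (∀ i, |β'' i / (-cz)| ≤ ε) ∧
      (∀ i, |A'' i i / (-cz)| ≤ ε) ∧
      |c₄'' / (-cz)| ≤ 4 * δ ∧
      (∀ i j : Fin n, i ≠ j →
        (1 / 4 - δ - ε / 2) * (ε + |A i j|) ≤ |A'' i j / (-cz)| ∧
        |A'' i j / (-cz)| ≤ (2 + 4 * δ + 5 * ε) * (ε + |A i j|)) ∧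
      (∀ i j : Fin n, j ≠ i →
        |c₁'' i / (-cz)| ≤ 5 * Real.sqrt (2 * (ε + |A i j|))) := by
  refine ⟨1000, by norm_num, ?_⟩
  intro n hn A hA hdiag ε δ hε hε1 hδ hδ1 amin hamin τ' τ γ hτ' hτ hγ
    A'' c₁'' c₂'' cz c₄'' β'' hA''s h01 h02 h03 h04 h05 h06 hS2 hS345
  subst hγ
  have hn2 : (2:ℝ) ≤ (n:ℝ) := by exact_mod_cast hn
  have hnpos : (0:ℝ) < n := by linarith
  have hamin0 : 0 ≤ amin := by
    obtain ⟨⟨i0, j0, hij0, h0⟩, -⟩ := hamin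
    rw [h0]; positivity
  have hm : 0 < ε + amin := by linarith
  set M : ℝ := max 1 (1 / (ε + amin)) with hMdef
  have hM1 : (1:ℝ) ≤ M := le_max_left _ _
  have hMpos : (0:ℝ) < M := by linarith
  have hMm : 1 ≤ M * (ε + amin) := by
    have h1 : 1 / (ε + amin) ≤ M := le_max_right _ _
    have := mul_le_mul_of_nonneg_right h1 hm.le
    rw [div_mul_cancel₀] at this
    · linarith
    · exact ne_of_gt hm
  clear_value M
  -- scale facts
  have e2 : 1000 * (n:ℝ)^2 * M ≤ ε * τ' := by
    have h := mul_le_mul_of_nonneg_left hτ' hε.le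
    have heq : ε * (1000 * ((n:ℝ)^2 / ε) * M) = 1000 * (n:ℝ)^2 * M := by
      field_simp
    linarith [heq ▸ h]
  have e1 : 1000 * (n:ℝ) * M ≤ ε * τ := by
    have h := mul_le_mul_of_nonneg_left hτ hε.le
    have heq : ε * (1000 * ((n:ℝ) / ε) * M) = 1000 * (n:ℝ) * M := by
      field_simp
    linarith [heq ▸ h]
  have hn2sq : (4:ℝ) ≤ (n:ℝ)^2 := by nlinarith
  have g1 : 2000 * M ≤ ε * τ := by linarith [e1, mul_nonneg (by linarith : (0:ℝ) ≤ (n:ℝ) - 2) hMpos.le]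
  have g2 : 4000 * M ≤ ε * τ' := by linarith [e2, mul_nonneg (by linarith [hn2sq] : (0:ℝ) ≤ (n:ℝ)^2 - 4) hMpos.le]
  have hτpos : 0 < τ := by nlinarith
  have hτ'pos : 0 < τ' := by nlinarith
  have hτbig : 20000 ≤ τ := by linarith [g1, hM1, mul_nonneg hτpos.le (by linarith : (0:ℝ) ≤ 1/10 - ε)]
  have hτ'big : 40000 ≤ τ' := by linarith [g2, hM1, mul_nonneg hτ'pos.le (by linarith : (0:ℝ) ≤ 1/10 - ε)]
  rw [q16_zero] at h01 h02 h03 h04 h05 h06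
  have hcz : cz < 0 := by linarith [h01, h02]
  obtain ⟨s, hs, rfl⟩ : ∃ s : ℝ, 0 < s ∧ cz = -s := ⟨-cz, by linarith, (neg_neg cz).symm⟩
  simp only [neg_neg]
  have hεs : 0 < ε * s := mul_pos hε hs
  have hδs : 0 < δ * s := mul_pos hδ hs
  have hεs1 : ε * s ≤ (1/10) * s := by linarith [mul_nonneg hs.le (by linarith : (0:ℝ) ≤ 1/10 - ε)]
  have hδs1 : δ * s ≤ (1/10) * s := by linarith [mul_nonneg hs.le (by linarith : (0:ℝ) ≤ 1/10 - δ)]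
  -- c2 bounds
  have hc2up : c₂'' * (τ' - 1) ≤ s := by
    nlinarith [h03, h02, (by linarith : (0:ℝ) < τ' + 1)]
  have hc2lo : -s ≤ c₂'' * (τ' - 1) := by
    nlinarith [h04, h01, (by linarith : (0:ℝ) < τ' + 1)]
  have hc2abs : |c₂''| * (τ' - 1) ≤ s := by
    rw [show |c₂''| * (τ' - 1) = |c₂'' * (τ' - 1)| by
      rw [abs_mul, abs_of_nonneg (by linarith : (0:ℝ) ≤ τ' - 1)]]
    exact abs_le.2 ⟨hc2lo, hc2up⟩
  have hc2s : |c₂''| ≤ s := by linarith [hc2abs, mul_nonneg (abs_nonneg c₂'') (by linarith : (0:ℝ) ≤ τ' - 2)]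
  have hc2τ' : |c₂''| * τ' ≤ 2 * s := by linarith [hc2abs, hc2s]
  have f1 : |c₂''| * 2000 ≤ ε * s := by
    have h1 : |c₂''| * (4000 * M) ≤ |c₂''| * (ε * τ') :=
      mul_le_mul_of_nonneg_left g2 (abs_nonneg _)
    have h2 : ε * (|c₂''| * τ') ≤ ε * (2 * s) := mul_le_mul_of_nonneg_left hc2τ' hε.le
    linarith [h1, h2, mul_nonneg (abs_nonneg c₂'') (by linarith : (0:ℝ) ≤ M - 1)]
  -- c4 bounds
  have f2 : |c₄''| ≤ 3 * δ * s := by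
    have hp1 : 0 ≤ (s + c₂'') * δ^2 :=
      mul_nonneg (by linarith [neg_abs_le c₂'']) (sq_nonneg δ)
    have hp2 : 0 ≤ (s - c₂'') * δ^2 :=
      mul_nonneg (by linarith [le_abs_self c₂'']) (sq_nonneg δ)
    have hp3 : 0 ≤ s * δ * (1 - 4*δ) :=
      mul_nonneg (mul_nonneg hs.le hδ.le) (by linarith)
    rw [abs_le]
    constructor <;> linarith [h05, h06]
  have hc4s : |c₄''| ≤ s := by linarith [f2, mul_nonneg hs.le (by linarith : (0:ℝ) ≤ 1 - 3*δ)]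
  -- S2 consequences
  have hS2' : ∀ i : Fin n,
      |A'' i i| * τ^2 ≤ s*(4*(n:ℝ)*τ) + |c₂''| * (4*(n:ℝ)*τ)^2 + |c₄''| ∧
      |β'' i| * τ ≤ s := by
    intro i
    obtain ⟨hA1, hB1⟩ := hS2 i 1 (Or.inl rfl)
    obtain ⟨hA2, hB2⟩ := hS2 i (-1) (Or.inr rfl)
    rw [q16_one] at hA1 hB1 hA2 hB2
    have hint1 : -|c₂''| * (4*(n:ℝ)*τ)^2 ≤ c₂'' * (4*(n:ℝ)*τ)^2 :=
      mul_le_mul_of_nonneg_right (neg_abs_le _) (sq_nonneg _)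
    have hint2 : c₂'' * (4*(n:ℝ)*τ)^2 ≤ |c₂''| * (4*(n:ℝ)*τ)^2 :=
      mul_le_mul_of_nonneg_right (le_abs_self _) (sq_nonneg _)
    constructor
    · rw [show |A'' i i| * τ^2 = |A'' i i * τ^2| by
        rw [abs_mul, abs_of_nonneg (sq_nonneg τ)]]
      rw [abs_le]
      constructor
      · linarith [hB1, hB2, neg_abs_le c₄'', le_abs_self c₄'']
      · linarith [hA1, hA2, neg_abs_le c₄'', le_abs_self c₄'']
    · have h4nτ : (0:ℝ) < 4*(n:ℝ)*τ := by positivity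
      have hub : β'' i * ((4*(n:ℝ)*τ)*τ) ≤ s*(4*(n:ℝ)*τ) := by linarith [hA1, hB1]
      have hlb : -(s*(4*(n:ℝ)*τ)) ≤ β'' i * ((4*(n:ℝ)*τ)*τ) := by linarith [hA2, hB2]
      have habs : |β'' i| * ((4*(n:ℝ)*τ)*τ) ≤ s*(4*(n:ℝ)*τ) := by
        rw [show |β'' i| * ((4*(n:ℝ)*τ)*τ) = |β'' i * ((4*(n:ℝ)*τ)*τ)| by
          rw [abs_mul, abs_of_nonneg (by positivity : (0:ℝ) ≤ (4*(n:ℝ)*τ)*τ)]]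
        exact abs_le.2 ⟨hlb, hub⟩
      have : (|β'' i| * τ) * (4*(n:ℝ)*τ) ≤ s * (4*(n:ℝ)*τ) := by linarith [habs]
      exact le_of_mul_le_mul_right this h4nτ
  -- master diagonal bound
  have fAiiM : ∀ i : Fin n, |A'' i i| * (1000 * M) ≤ 37 * (ε * s) := by
    intro i
    obtain ⟨t0, -⟩ := hS2' i
    have p1 : s*(4*(n:ℝ)*τ)*(1000*M) ≤ 4*(ε*s)*τ^2 := by
      have h := mul_le_mul_of_nonneg_left e1 (by positivity : (0:ℝ) ≤ 4*s*τ)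
      linarith [h]
    have p2 : |c₂''| * (4*(n:ℝ)*τ)^2*(1000*M) ≤ 32*(ε*s)*τ^2 := by
      have q1a : |c₂''| * (1000*(n:ℝ)^2*M) ≤ |c₂''| * (ε*τ') :=
        mul_le_mul_of_nonneg_left e2 (abs_nonneg _)
      have q1b : ε * (|c₂''| * τ') ≤ ε * (2*s) := mul_le_mul_of_nonneg_left hc2τ' hε.le
      have q1 : |c₂''| * (1000*(n:ℝ)^2*M) ≤ 2*(ε*s) := by linarith [q1a, q1b]
      have h := mul_le_mul_of_nonneg_left q1 (by positivity : (0:ℝ) ≤ 16*τ^2)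
      linarith [h]
    have p3 : |c₄''| * (1000*M) ≤ (ε*s)*τ^2 := by
      have h4 : |c₄''| * (1000*M) ≤ s*(1000*M) :=
        mul_le_mul_of_nonneg_right hc4s (by positivity)
      have q3 : (2000*M)*s ≤ (ε*τ)*(s*τ) := by
        apply mul_le_mul g1 _ hs.le (by positivity)
        linarith [mul_nonneg hs.le (by linarith : (0:ℝ) ≤ τ - 1)]
      linarith [q3, h4, mul_nonneg (mul_nonneg hε.le hs.le) (sq_nonneg τ)]
    have t0' := mul_le_mul_of_nonneg_right t0 (by positivity : (0:ℝ) ≤ 1000*M)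
    have final : (|A'' i i| * (1000*M)) * τ^2 ≤ (37*(ε*s)) * τ^2 := by linarith [t0', p1, p2, p3]
    exact le_of_mul_le_mul_right final (by positivity)
  have fβM : ∀ i : Fin n, |β'' i| * (2000 * M) ≤ ε * s := by
    intro i
    obtain ⟨-, hb⟩ := hS2' i
    have h1 : ε * (|β'' i| * τ) ≤ ε * s := mul_le_mul_of_nonneg_left hb hε.le
    have h2 : |β'' i| * (2000*M) ≤ |β'' i| * (ε*τ) :=
      mul_le_mul_of_nonneg_left g1 (abs_nonneg _)
    linarith [h1, h2]
  have pairMain : ∀ i j : Fin n, i ≠ j →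
      (((1:ℝ)/4 - δ - ε/2) * (ε + |A i j|) ≤ |A'' i j / s| ∧
        |A'' i j / s| ≤ (2 + 4*δ + 5*ε) * (ε + |A i j|)) ∧
      |c₁'' i / s| ≤ 5 * Real.sqrt (2 * (ε + |A i j|)) := by
    intro i j hij
    have hsym : A'' j i = A'' i j := hA''s.apply i j
    have ht : (0:ℝ) < ε + |A i j| := by positivity
    have hmt : ε + amin ≤ ε + |A i j| := by
      have := hamin.2 ⟨i, j, hij, rfl⟩; linarith
    obtain ⟨h3a, -, h4a, -⟩ := hS345 i j hij 1 1 (Or.inl rfl) (Or.inl rfl) _ rfl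
    obtain ⟨h3b, -, h4b, -⟩ := hS345 i j hij 1 (-1) (Or.inl rfl) (Or.inr rfl) _ rfl
    obtain ⟨h3c, -, h4c, -⟩ := hS345 i j hij (-1) 1 (Or.inr rfl) (Or.inl rfl) _ rfl
    obtain ⟨h3d, -, h4d, -⟩ := hS345 i j hij (-1) (-1) (Or.inr rfl) (Or.inr rfl) _ rfl
    rw [smul_add, smul_smul, smul_smul] at h4a h4b h4c h4d
    rw [q16_two] at h3a h3b h3c h3d h4a h4b h4c h4d
    rw [hsym] at h3a h3b h3c h3d h4a h4b h4c h4d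
    clear hS345 hS2 h01 h02 h03 h04 h05 h06 hτ' hτ hτbig hτ'big hτpos hτ'pos
      e1 e2 g1 g2 hn2sq hc2up hc2lo hc2abs hc2s hc2τ' hc4s hS2' hdiag hA hn hsym
    set t : ℝ := ε + |A i j| with htdef
    set R : ℝ := Real.sqrt (2 * t) with hRdef
    have hR : 0 < R := Real.sqrt_pos.2 (by linarith)
    have hRne : R ≠ 0 := ne_of_gt hR
    have hR2 : R^2 = 2*t := Real.sq_sqrt (by linarith)
    have htq2 : t * R⁻¹^2 = 1/2 := by
      have hRR' : R^2 * R⁻¹^2 = 1 := by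
        rw [← mul_pow, mul_inv_cancel₀ hRne, one_pow]
      linear_combination (-(R⁻¹^2)/2) * hR2 + (1/2) * hRR'
    clear_value t R
    ring_nf at h3a h3b h3c h3d
    have hMinv1 : M⁻¹ ≤ 1 := by
      rw [inv_eq_one_div, div_le_iff₀ hMpos]; linarith
    have hMinv : M⁻¹ ≤ ε + amin := by
      rw [inv_eq_one_div, div_le_iff₀ hMpos]; linarith [hMm]
    have hMinvpos : 0 < M⁻¹ := inv_pos.2 hMpos
    have hRinvM : R⁻¹ ≤ M := by
      have h1 : M⁻¹ ≤ R := by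
        rw [hRdef]
        refine (Real.le_sqrt hMinvpos.le (by linarith)).2 ?_
        have hsq := mul_le_mul_of_nonneg_left hMinv1 hMinvpos.le
        linarith [hsq, hMinv, hmt, ht]
      calc R⁻¹ ≤ (M⁻¹)⁻¹ := inv_anti₀ hMinvpos h1
      _ = M := inv_inv M
    have hMt1 : 1 ≤ M * t := by
      have := mul_le_mul_of_nonneg_left hmt hMpos.le
      linarith [hMm]
    have fAt : ∀ k : Fin n, |A'' k k| * 1000 ≤ 37*(ε*s)*t := by
      intro k
      have step1 := mul_le_mul_of_nonneg_left hMt1 (abs_nonneg (A'' k k))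
      have step3 : (|A'' k k| * (1000*M)) * t ≤ (37*(ε*s)) * t :=
        mul_le_mul_of_nonneg_right (fAiiM k) ht.le
      linarith [step1, step3]
    have dA : ∀ k : Fin n, |A'' k k| * R⁻¹^2 ≤ 37/2000*(ε*s) := by
      intro k
      calc |A'' k k| * R⁻¹^2 ≤ (37*(ε*s)*t/1000) * R⁻¹^2 :=
          mul_le_mul_of_nonneg_right (by linarith [fAt k]) (sq_nonneg _)
      _ = (37/1000*(ε*s))*(t*R⁻¹^2) := by ring
      _ = 37/2000*(ε*s) := by rw [htq2]; ring
    have dAi1 : A'' i i * R⁻¹^2 ≤ 37/2000*(ε*s) :=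
      le_trans (mul_le_mul_of_nonneg_right (le_abs_self _) (sq_nonneg _)) (dA i)
    have dAi2 : -(37/2000*(ε*s)) ≤ A'' i i * R⁻¹^2 := by
      have := mul_le_mul_of_nonneg_right (neg_abs_le (A'' i i)) (sq_nonneg R⁻¹)
      linarith [dA i]
    have dAj1 : A'' j j * R⁻¹^2 ≤ 37/2000*(ε*s) :=
      le_trans (mul_le_mul_of_nonneg_right (le_abs_self _) (sq_nonneg _)) (dA j)
    have dAj2 : -(37/2000*(ε*s)) ≤ A'' j j * R⁻¹^2 := by
      have := mul_le_mul_of_nonneg_right (neg_abs_le (A'' j j)) (sq_nonneg R⁻¹)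
      linarith [dA j]
    have dβ : |β'' i| * R⁻¹ ≤ 1/2000*(ε*s) := by
      calc |β'' i| * R⁻¹ ≤ |β'' i| * M := mul_le_mul_of_nonneg_left hRinvM (abs_nonneg _)
      _ ≤ 1/2000*(ε*s) := by linarith [fβM i]
    have dβ1 : β'' i * R⁻¹ ≤ 1/2000*(ε*s) :=
      le_trans (mul_le_mul_of_nonneg_right (le_abs_self _) (inv_nonneg.2 hR.le)) dβ
    have dβ2 : -(1/2000*(ε*s)) ≤ β'' i * R⁻¹ := by
      have := mul_le_mul_of_nonneg_right (neg_abs_le (β'' i)) (inv_nonneg.2 hR.le)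
      linarith [dβ]
    have dc21 : c₂'' ≤ 1/2000*(ε*s) := le_trans (le_abs_self _) (by linarith [f1])
    have dc22 : -(1/2000*(ε*s)) ≤ c₂'' := by linarith [neg_abs_le c₂'', f1]
    have dc41 : c₄'' ≤ 3*(δ*s) := le_trans (le_abs_self _) (by linarith [f2])
    have dc42 : -(3*(δ*s)) ≤ c₄'' := by linarith [neg_abs_le c₄'', f2]
    have hRR : R^2 * R⁻¹^2 = 1 := by
      rw [← mul_pow, mul_inv_cancel₀ hRne, one_pow]
    have hADeq : ∀ x : ℝ, t * (2*(x * R⁻¹^2)) = x := by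
      intro x
      calc t * (2*(x * R⁻¹^2)) = x * (2*t) * R⁻¹^2 := by ring
      _ = x * R^2 * R⁻¹^2 := by rw [hR2]
      _ = x * (R^2 * R⁻¹^2) := by ring
      _ = x := by rw [hRR, mul_one]
    have coreU1 : A'' i j * R⁻¹^2 ≤ (1 + 2*δ + ε)*s := by
      linarith [h3a, h3d, dAi1, dAi2, dAj1, dAj2, dc21, dc22, dc41, dc42,
        hεs.le, hδs.le]
    have coreU2 : -((1 + 2*δ + ε)*s) ≤ A'' i j * R⁻¹^2 := by
      linarith [h3b, h3c, dAi1, dAi2, dAj1, dAj2, dc21, dc22, dc41, dc42,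
        hεs.le, hδs.le]
    have coreLabs : ((1:ℝ)/4 - δ - ε/2)*(t*s) ≤ |A'' i j| := by
      rcases le_or_gt 0 (A i j) with hA0 | hA0
      · have H4a := h4a (by rw [if_pos hA0]; norm_num)
        have H4d := h4d (by rw [if_pos hA0]; norm_num)
        ring_nf at H4a H4d
        have coreL : ((1:ℝ)/4 - δ - ε/2)*s ≤ 2*(A'' i j * R⁻¹^2) := by
          linarith [H4a, H4d, dAi1, dAi2, dAj1, dAj2, dc21, dc22, dc41, dc42,
            hεs.le, hδs.le]
        have h1 := mul_le_mul_of_nonneg_left coreL ht.le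
        linarith [le_abs_self (A'' i j), h1, hADeq (A'' i j)]
      · have H4b := h4b (by rw [if_neg (not_le.2 hA0)]; norm_num)
        have H4c := h4c (by rw [if_neg (not_le.2 hA0)]; norm_num)
        ring_nf at H4b H4c
        have coreL : ((1:ℝ)/4 - δ - ε/2)*s ≤ -(2*(A'' i j * R⁻¹^2)) := by
          linarith [H4b, H4c, dAi1, dAi2, dAj1, dAj2, dc21, dc22, dc41, dc42,
            hεs.le, hδs.le]
        have h1 := mul_le_mul_of_nonneg_left coreL ht.le
        linarith [neg_le_abs (A'' i j), h1, hADeq (A'' i j)]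
    refine ⟨⟨?_, ?_⟩, ?_⟩
    · -- lower bound
      rw [abs_div, abs_of_pos hs, le_div_iff₀ hs]
      linarith [coreLabs]
    · -- upper bound
      rw [abs_div, abs_of_pos hs, div_le_iff₀ hs]
      have hDabs : |A'' i j * R⁻¹^2| ≤ (1 + 2*δ + ε)*s := abs_le.2 ⟨coreU2, coreU1⟩
      have hAD : |A'' i j| = 2*t*|A'' i j * R⁻¹^2| := by
        rw [abs_mul, abs_pow, abs_inv, abs_of_pos hR]
        linear_combination (-1 : ℝ) * hADeq |A'' i j|
      have h5 := mul_le_mul_of_nonneg_left hDabs (by linarith : (0:ℝ) ≤ 2*t)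
      linarith [hAD, h5, mul_nonneg (mul_nonneg hε.le ht.le) hs.le,
        mul_nonneg (mul_nonneg hδ.le ht.le) hs.le]
    · -- c1 bound
      have gc1 : c₁'' i * R⁻¹ ≤ 5/2*s := by
        linarith [h3a, h3b, dAi1, dAi2, dAj1, dAj2, dc21, dc22, dc41, dc42,
          dβ1, dβ2, hεs1, hδs1]
      have gc2 : -(5/2*s) ≤ c₁'' i * R⁻¹ := by
        linarith [h3c, h3d, dAi1, dAi2, dAj1, dAj2, dc21, dc22, dc41, dc42,
          dβ1, dβ2, hεs1, hδs1]
      have habs : |c₁'' i * R⁻¹| ≤ 5/2*s := abs_le.2 ⟨gc2, gc1⟩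
      rw [abs_div, abs_of_pos hs, div_le_iff₀ hs]
      have he : |c₁'' i| = |c₁'' i * R⁻¹| * R := by
        rw [abs_mul, abs_inv, abs_of_pos hR, mul_assoc, inv_mul_cancel₀ hRne, mul_one]
      have h6 := mul_le_mul_of_nonneg_right habs hR.le
      linarith [he, h6, mul_nonneg hs.le hR.le]
  -- easy conclusions
  refine ⟨by linarith, ?_, ?_, ?_, ?_, ?_, ?_⟩
  · rw [abs_div, abs_of_pos hs, div_le_iff₀ hs]
    linarith [f1, abs_nonneg c₂'']
  · intro i
    rw [abs_div, abs_of_pos hs, div_le_iff₀ hs]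
    linarith [fβM i, abs_nonneg (β'' i), mul_nonneg (abs_nonneg (β'' i)) (by linarith : (0:ℝ) ≤ M - 1)]
  · intro i
    rw [abs_div, abs_of_pos hs, div_le_iff₀ hs]
    linarith [fAiiM i, abs_nonneg (A'' i i), mul_nonneg (abs_nonneg (A'' i i)) (by linarith : (0:ℝ) ≤ M - 1)]
  · rw [abs_div, abs_of_pos hs, div_le_iff₀ hs]
    linarith [f2, hδs.le]
  · -- off-diagonal bounds
    intro i j hij
    exact (pairMain i j hij).1
  · intro i j hji
    exact (pairMain i j hji.symm).2
end
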